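/- arXiv:1706.06540 — 8 statements merged into one kernel-verified Lean document; each statement's English description precedes it below -/
import Mathlib

section
/- Let (L, [·,·], Δ, α) be a Hom-Lie superbialgebra and let β : L → L be an even linear map which is a morphism of Hom-Lie superbialgebras (i.e. α∘β = β∘α, β∘[·,·] = [·,·]∘β^{⊗2} and Δ∘β = β^{⊗2}∘Δ). Then L_β = (L, [·,·]_β, Δ_β, βα), where [x,y]_β = β([x,y]) and Δ_β = Δ∘β, is again a Hom-Lie superbialgebra; moreover L_β is multiplicative whenever L is. -/
open TensorProduct

variable (K : Type*) [Field K] [CharZero K]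

/-- The super sign `(-1)^{p·q}` for parities `p q : ZMod 2`. -/
def eps (p q : ZMod 2) : K := (-1 : K) ^ (p.val * q.val)

variable {K}

section Defs

variable {L M : Type*} [AddCommGroup L] [Module K L] [AddCommGroup M] [Module K M]

/-- `x` is homogeneous of parity `p` with respect to the grading involution `σ`
(`σ` acts as `(-1)^i` on the degree-`i` part of the `ℤ₂`-graded space). -/
def IsHomog (σ : L →ₗ[K] L) (p : ZMod 2) (x : L) : Prop :=
  σ x = ((-1 : K) ^ p.val) • x

/-- The operator multiplying a homogeneous element of parity `q` by `(-1)^{p·q}`. -/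
noncomputable def signPow (σ : L →ₗ[K] L) (p : ZMod 2) : L →ₗ[K] L :=
  ((2 : K)⁻¹ * (1 + (-1 : K) ^ p.val)) • (LinearMap.id : L →ₗ[K] L)
    + ((2 : K)⁻¹ * (1 - (-1 : K) ^ p.val)) • σ

/-- The operator multiplying `x ⊗ y` (with `x, y` homogeneous of parities `p, q`)
by the Koszul sign `(-1)^{p·q}`. -/
noncomputable def signOp (σL : L →ₗ[K] L) (σM : M →ₗ[K] M) :
    L ⊗[K] M →ₗ[K] L ⊗[K] M :=
  (2 : K)⁻¹ • ((LinearMap.id : L ⊗[K] M →ₗ[K] L ⊗[K] M)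
    + TensorProduct.map σL LinearMap.id
    + TensorProduct.map LinearMap.id σM
    - TensorProduct.map σL σM)

/-- The super twist `τ(x ⊗ y) = (-1)^{|x||y|} y ⊗ x`. -/
noncomputable def superTwist (σ : L →ₗ[K] L) : L ⊗[K] L →ₗ[K] L ⊗[K] L :=
  (TensorProduct.comm K L L).toLinearMap ∘ₗ signOp σ σ

/-- The super cyclic map `ξ(x ⊗ y ⊗ z) = (-1)^{|x|(|y|+|z|)} y ⊗ z ⊗ x`. -/
noncomputable def superCyclic (σ : L →ₗ[K] L) :
    L ⊗[K] (L ⊗[K] L) →ₗ[K] L ⊗[K] (L ⊗[K] L) :=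
  (TensorProduct.assoc K L L L).toLinearMap
    ∘ₗ (TensorProduct.comm K L (L ⊗[K] L)).toLinearMap
    ∘ₗ signOp σ (TensorProduct.map σ σ)

/-- The adjoint action `ad_x` on `L ⊗ L`, for `x` homogeneous of parity `p`:
`ad_x(y₁ ⊗ y₂) = [x,y₁] ⊗ α(y₂) + (-1)^{|x||y₁|} α(y₁) ⊗ [x,y₂]`. -/
noncomputable def adT (σ : L →ₗ[K] L) (br : L →ₗ[K] L →ₗ[K] L) (α : L →ₗ[K] L)
    (p : ZMod 2) (x : L) : L ⊗[K] L →ₗ[K] L ⊗[K] L :=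
  TensorProduct.map (br x) α + TensorProduct.map (α ∘ₗ signPow σ p) (br x)

/-- The adjoint action `ad_x` on `L ⊗ (L ⊗ L)`, for `x` homogeneous of parity `p`. -/
noncomputable def adT3 (σ : L →ₗ[K] L) (br : L →ₗ[K] L →ₗ[K] L) (α : L →ₗ[K] L)
    (p : ZMod 2) (x : L) :
    L ⊗[K] (L ⊗[K] L) →ₗ[K] L ⊗[K] (L ⊗[K] L) :=
  TensorProduct.map (br x) (TensorProduct.map α α)
    + TensorProduct.map (α ∘ₗ signPow σ p) (TensorProduct.map (br x) α)
    + TensorProduct.map (α ∘ₗ signPow σ p)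
        (TensorProduct.map (α ∘ₗ signPow σ p) (br x))

/-- A Hom-Lie superalgebra `(L, [·,·], α)` with grading involution `σ`:
the bracket and `α` are even, the bracket is skew-supersymmetric and
satisfies the Hom-super-Jacobi identity. -/
def IsHomLieSuperalgebra (σ : L →ₗ[K] L) (br : L →ₗ[K] L →ₗ[K] L) (α : L →ₗ[K] L) : Prop :=
  σ ∘ₗ σ = LinearMap.id
  ∧ (∀ x y, σ (br x y) = br (σ x) (σ y))
  ∧ (∀ x, σ (α x) = α (σ x))
  ∧ (∀ p q x y, IsHomog σ p x → IsHomog σ q y → br x y = -(eps K p q) • br y x)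
  ∧ (∀ p q r x y z, IsHomog σ p x → IsHomog σ q y → IsHomog σ r z →
      eps K p r • br (α x) (br y z) + eps K r q • br (α z) (br x y)
        + eps K q p • br (α y) (br z x) = 0)

/-- Multiplicativity: `α([x,y]) = [α(x), α(y)]`. -/
def IsMultiplicative (br : L →ₗ[K] L →ₗ[K] L) (α : L →ₗ[K] L) : Prop :=
  ∀ x y, α (br x y) = br (α x) (α y)

/-- A Hom-Lie supercoalgebra `(L, Δ, α)` with grading involution `σ`. -/
def IsHomLieSupercoalgebra (σ α : L →ₗ[K] L) (Δ : L →ₗ[K] L ⊗[K] L) : Prop :=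
  σ ∘ₗ σ = LinearMap.id
  ∧ (∀ x, σ (α x) = α (σ x))
  ∧ TensorProduct.map σ σ ∘ₗ Δ = Δ ∘ₗ σ
  ∧ (∀ x, ∃ u, Δ x = u - superTwist σ u)
  ∧ (LinearMap.id + superCyclic σ + superCyclic σ ∘ₗ superCyclic σ)
      ∘ₗ TensorProduct.map α Δ ∘ₗ Δ = 0

/-- Co-multiplicativity: `Δ ∘ α = α^{⊗2} ∘ Δ`. -/
def IsComultiplicative (α : L →ₗ[K] L) (Δ : L →ₗ[K] L ⊗[K] L) : Prop :=
  Δ ∘ₗ α = TensorProduct.map α α ∘ₗ Δ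

/-- A Hom-Lie superbialgebra `(L, [·,·], Δ, α)`. -/
def IsHomLieSuperbialgebra (σ : L →ₗ[K] L) (br : L →ₗ[K] L →ₗ[K] L) (α : L →ₗ[K] L)
    (Δ : L →ₗ[K] L ⊗[K] L) : Prop :=
  IsHomLieSuperalgebra σ br α
  ∧ IsHomLieSupercoalgebra σ α Δ
  ∧ ∀ p q x y, IsHomog σ p x → IsHomog σ q y →
      Δ (br x y) = adT σ br α p (α x) (Δ y) - eps K p q • adT σ br α q (α y) (Δ x)

/-- A multiplicative Hom-Lie superbialgebra. -/
def IsMultHomLieSuperbialgebra (σ : L →ₗ[K] L) (br : L →ₗ[K] L →ₗ[K] L) (α : L →ₗ[K] L)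
    (Δ : L →ₗ[K] L ⊗[K] L) : Prop :=
  IsHomLieSuperbialgebra σ br α Δ ∧ IsMultiplicative br α ∧ IsComultiplicative α Δ

/-- An admissible Hom-Lie superalgebra: `[(Id - α²)(x), α(y)] = 0`. -/
def IsAdmissible (σ : L →ₗ[K] L) (br : L →ₗ[K] L →ₗ[K] L) (α : L →ₗ[K] L) : Prop :=
  IsHomLieSuperalgebra σ br α ∧ ∀ x y, br (x - α (α x)) (α y) = 0

/-- A morphism of Hom-Lie superbialgebras: an even linear map commuting with the
twist maps, the brackets and the cobrackets. -/
def IsBialgMorphism {L₂ : Type*} [AddCommGroup L₂] [Module K L₂]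
    (σ₁ : L →ₗ[K] L) (br₁ : L →ₗ[K] L →ₗ[K] L) (α₁ : L →ₗ[K] L) (Δ₁ : L →ₗ[K] L ⊗[K] L)
    (σ₂ : L₂ →ₗ[K] L₂) (br₂ : L₂ →ₗ[K] L₂ →ₗ[K] L₂) (α₂ : L₂ →ₗ[K] L₂)
    (Δ₂ : L₂ →ₗ[K] L₂ ⊗[K] L₂) (f : L →ₗ[K] L₂) : Prop :=
  (∀ x, σ₂ (f x) = f (σ₁ x)) ∧ (∀ x, α₂ (f x) = f (α₁ x))
  ∧ (∀ x y, f (br₁ x y) = br₂ (f x) (f y))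
  ∧ TensorProduct.map f f ∘ₗ Δ₁ = Δ₂ ∘ₗ f

/-- A representation `ρ` of the Hom-Lie superalgebra `(L, br, αg)` on `(M, σM)`
with respect to `A`. -/
def IsRepresentation (σg : L →ₗ[K] L) (br : L →ₗ[K] L →ₗ[K] L) (αg : L →ₗ[K] L)
    (σM A : M →ₗ[K] M) (ρ : L →ₗ[K] M →ₗ[K] M) : Prop :=
  (∀ x v, σM (ρ x v) = ρ (σg x) (σM v))
  ∧ (∀ x, ρ (αg x) ∘ₗ A = A ∘ₗ ρ x)
  ∧ (∀ p q x y, IsHomog σg p x → IsHomog σg q y →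
      ρ (br x y) ∘ₗ A = ρ (αg x) ∘ₗ ρ y - eps K p q • (ρ (αg y) ∘ₗ ρ x))

/-- The signed middle-four interchange
`(r₁ ⊗ r₂) ⊗ (r₁' ⊗ r₂') ↦ (-1)^{|r₂||r₁'|} (r₁ ⊗ r₁') ⊗ (r₂ ⊗ r₂')`. -/
noncomputable def signedMidSwap (σ : L →ₗ[K] L) :
    (L ⊗[K] L) ⊗[K] (L ⊗[K] L) →ₗ[K] (L ⊗[K] L) ⊗[K] (L ⊗[K] L) :=
  (TensorProduct.assoc K (L ⊗[K] L) L L).toLinearMap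
    ∘ₗ TensorProduct.map (TensorProduct.assoc K L L L).symm.toLinearMap LinearMap.id
    ∘ₗ TensorProduct.map (TensorProduct.map LinearMap.id (superTwist σ)) LinearMap.id
    ∘ₗ TensorProduct.map (TensorProduct.assoc K L L L).toLinearMap LinearMap.id
    ∘ₗ (TensorProduct.assoc K (L ⊗[K] L) L L).symm.toLinearMap

/-- `[r₁₂, r'₁₃] = Σ (-1)^{|r'₁||r₂|} [r₁,r'₁] ⊗ α(r₂) ⊗ α(r'₂)`. -/
noncomputable def br1213 (σ : L →ₗ[K] L) (br : L →ₗ[K] L →ₗ[K] L) (α : L →ₗ[K] L)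
    (r r' : L ⊗[K] L) : L ⊗[K] (L ⊗[K] L) :=
  TensorProduct.map (TensorProduct.lift br) (TensorProduct.map α α)
    (signedMidSwap σ (r ⊗ₜ[K] r'))

/-- `[r₁₂, r'₂₃] = Σ α(r₁) ⊗ [r₂,r'₁] ⊗ α(r'₂)`. -/
noncomputable def br1223 (br : L →ₗ[K] L →ₗ[K] L) (α : L →ₗ[K] L)
    (r r' : L ⊗[K] L) : L ⊗[K] (L ⊗[K] L) :=
  TensorProduct.map α
      (TensorProduct.map (TensorProduct.lift br) α
        ∘ₗ (TensorProduct.assoc K L L L).symm.toLinearMap)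
    ((TensorProduct.assoc K L L (L ⊗[K] L)).toLinearMap (r ⊗ₜ[K] r'))

/-- `[r₁₃, r'₂₃] = Σ (-1)^{|r'₁||r₂|} α(r₁) ⊗ α(r'₁) ⊗ [r₂,r'₂]`. -/
noncomputable def br1323 (σ : L →ₗ[K] L) (br : L →ₗ[K] L →ₗ[K] L) (α : L →ₗ[K] L)
    (r r' : L ⊗[K] L) : L ⊗[K] (L ⊗[K] L) :=
  (TensorProduct.assoc K L L L).toLinearMap
    (TensorProduct.map (TensorProduct.map α α) (TensorProduct.lift br)
      (signedMidSwap σ (r ⊗ₜ[K] r')))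

/-- The left-hand side `[[r,r]]^α` of the classical Hom-Yang-Baxter equation. -/
noncomputable def chybeEl (σ : L →ₗ[K] L) (br : L →ₗ[K] L →ₗ[K] L) (α : L →ₗ[K] L)
    (r : L ⊗[K] L) : L ⊗[K] (L ⊗[K] L) :=
  br1213 σ br α r r + br1223 br α r r + br1323 σ br α r r

/-- A coboundary Hom-Lie superbialgebra. -/
def IsCoboundary (σ : L →ₗ[K] L) (br : L →ₗ[K] L →ₗ[K] L) (α : L →ₗ[K] L)
    (Δ : L →ₗ[K] L ⊗[K] L) (r : L ⊗[K] L) : Prop :=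
  IsHomLieSuperbialgebra σ br α Δ
  ∧ TensorProduct.map α α r = r
  ∧ ∀ p x, IsHomog σ p x → Δ x = adT σ br α p x r

/-- A quasi-triangular Hom-Lie superbialgebra: a coboundary one where `r`
satisfies the classical Hom-Yang-Baxter equation. -/
def IsQuasiTriangular (σ : L →ₗ[K] L) (br : L →ₗ[K] L →ₗ[K] L) (α : L →ₗ[K] L)
    (Δ : L →ₗ[K] L ⊗[K] L) (r : L ⊗[K] L) : Prop :=
  IsCoboundary σ br α Δ r ∧ chybeEl σ br α r = 0

/-- The global linear map `x ↦ ad_x(r) = Σ [x,r₁] ⊗ α(r₂) + (-1)^{|x||r₁|} α(r₁) ⊗ [x,r₂]`. -/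
noncomputable def adMap (σ : L →ₗ[K] L) (br : L →ₗ[K] L →ₗ[K] L) (α : L →ₗ[K] L)
    (r : L ⊗[K] L) : L →ₗ[K] L ⊗[K] L :=
  (TensorProduct.map (TensorProduct.lift br) α
      ∘ₗ (TensorProduct.assoc K L L L).symm.toLinearMap
    + TensorProduct.map α (TensorProduct.lift br)
        ∘ₗ (TensorProduct.assoc K L L L).toLinearMap
        ∘ₗ TensorProduct.map (superTwist σ) LinearMap.id
        ∘ₗ (TensorProduct.assoc K L L L).symm.toLinearMap)
  ∘ₗ (TensorProduct.mk K L (L ⊗[K] L)).flip r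

end Defs


section Aux

variable {K : Type*} [Field K] [CharZero K] {L : Type*} [AddCommGroup L] [Module K L]

theorem aux_superCyclic_comm (σ β : L →ₗ[K] L) (hβσ : ∀ x, σ (β x) = β (σ x)) :
    superCyclic σ ∘ₗ TensorProduct.map β (TensorProduct.map β β)
      = TensorProduct.map β (TensorProduct.map β β) ∘ₗ superCyclic σ := by
  apply TensorProduct.ext'
  intro x w
  induction w using TensorProduct.induction_on with
  | zero => simp
  | tmul y z =>
      simp only [LinearMap.comp_apply, TensorProduct.map_tmul, superCyclic, signOp,
        LinearMap.smul_apply, LinearMap.add_apply, LinearMap.sub_apply, LinearMap.id_apply,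
        map_add, map_sub, map_smul, TensorProduct.comm_tmul, TensorProduct.assoc_tmul,
        LinearEquiv.coe_coe, hβσ]
  | add u v hu hv =>
      simp only [TensorProduct.tmul_add, map_add] at hu hv ⊢
      rw [hu, hv]

theorem aux_adT_twist (σ : L →ₗ[K] L) (br : L →ₗ[K] L →ₗ[K] L) (α β : L →ₗ[K] L)
    (hβσ : ∀ x, σ (β x) = β (σ x)) (hβα : ∀ x, α (β x) = β (α x))
    (hβbr : ∀ x y, β (br x y) = br (β x) (β y)) (p : ZMod 2) (z : L) :
    adT σ (br.compr₂ β) (β ∘ₗ α) p (β z) ∘ₗ TensorProduct.map β β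
      = TensorProduct.map β β ∘ₗ TensorProduct.map β β ∘ₗ adT σ br α p z := by
  apply TensorProduct.ext'
  intro a b
  simp only [adT, signPow, LinearMap.comp_apply, LinearMap.add_apply, TensorProduct.map_tmul,
    LinearMap.compr₂_apply, LinearMap.smul_apply, LinearMap.id_apply, map_add, map_smul,
    TensorProduct.tmul_add, TensorProduct.add_tmul, TensorProduct.smul_tmul',
    TensorProduct.tmul_smul, hβσ, hβα, hβbr]

end Aux

/-- Twisting a Hom-Lie superbialgebra by an endomorphism
(Theorem 1.9 of the paper). -/
theorem homLieSuperbialgebra_twist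
    {K : Type*} [Field K] [CharZero K] {L : Type*} [AddCommGroup L] [Module K L]
    (σ : L →ₗ[K] L) (br : L →ₗ[K] L →ₗ[K] L) (α : L →ₗ[K] L) (Δ : L →ₗ[K] L ⊗[K] L)
    (β : L →ₗ[K] L)
    (hbi : IsHomLieSuperbialgebra σ br α Δ)
    (hβσ : ∀ x, σ (β x) = β (σ x))
    (hβα : ∀ x, α (β x) = β (α x))
    (hβbr : ∀ x y, β (br x y) = br (β x) (β y))
    (hβΔ : TensorProduct.map β β ∘ₗ Δ = Δ ∘ₗ β) :
    IsHomLieSuperbialgebra σ (br.compr₂ β) (β ∘ₗ α) (Δ ∘ₗ β)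
      ∧ (IsMultiplicative br α ∧ IsComultiplicative α Δ →
          IsMultiplicative (br.compr₂ β) (β ∘ₗ α)
            ∧ IsComultiplicative (β ∘ₗ α) (Δ ∘ₗ β)) := by
  obtain ⟨⟨hσσ, hσbr, hσα, hskew, hjac⟩, ⟨-, -, hσΔ, hIm, hco5⟩, hcompat⟩ := hbi
  have hΔβ : ∀ x, Δ (β x) = TensorProduct.map β β (Δ x) :=
    fun x => (LinearMap.congr_fun hβΔ x).symm
  have hcyc := aux_superCyclic_comm σ β hβσ
  have h1 : TensorProduct.map (β ∘ₗ α) (Δ ∘ₗ β)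
      = TensorProduct.map β (TensorProduct.map β β) ∘ₗ TensorProduct.map α Δ := by
    rw [← hβΔ, TensorProduct.map_comp]
  have h2 : TensorProduct.map α Δ ∘ₗ TensorProduct.map β β
      = TensorProduct.map β (TensorProduct.map β β) ∘ₗ TensorProduct.map α Δ := by
    rw [← TensorProduct.map_comp, ← TensorProduct.map_comp]
    congr 1
    · exact LinearMap.ext hβα
    · exact hβΔ.symm
  refine ⟨⟨⟨hσσ, ?_, ?_, ?_, ?_⟩, ⟨hσσ, ?_, ?_, ?_, ?_⟩, ?_⟩, ?_⟩
  · intro x y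
    simp only [LinearMap.compr₂_apply]
    rw [hβσ, hσbr]
  · intro x
    simp only [LinearMap.comp_apply]
    rw [hβσ, hσα]
  · intro p q x y hx hy
    simp only [LinearMap.compr₂_apply]
    rw [hskew p q x y hx hy, map_smul]
  · intro p q r x y z hx hy hz
    have key : ∀ a b c : L, (br.compr₂ β) ((β ∘ₗ α) a) ((br.compr₂ β) b c)
        = β (β (br (α a) (br b c))) := by
      intro a b c
      simp only [LinearMap.compr₂_apply, LinearMap.comp_apply, ← hβbr]
    have h0 : β (β (eps K p r • br (α x) (br y z) + eps K r q • br (α z) (br x y)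
        + eps K q p • br (α y) (br z x))) = 0 := by
      rw [hjac p q r x y z hx hy hz, map_zero, map_zero]
    simpa only [key, map_add, map_smul] using h0
  · intro x
    simp only [LinearMap.comp_apply]
    rw [hβσ, hσα]
  · ext x
    simp only [LinearMap.comp_apply]
    rw [← LinearMap.comp_apply (TensorProduct.map σ σ), hσΔ]
    simp only [LinearMap.comp_apply]
    rw [hβσ]
  · intro x
    exact hIm (β x)
  · ext x
    simp only [LinearMap.comp_apply, LinearMap.add_apply, LinearMap.id_apply,
      LinearMap.zero_apply]
    rw [hΔβ]
    have e2 : TensorProduct.map (β ∘ₗ α) (Δ ∘ₗ β) (TensorProduct.map β β (Δ x))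
        = TensorProduct.map β (TensorProduct.map β β)
            (TensorProduct.map β (TensorProduct.map β β)
              (TensorProduct.map α Δ (Δ x))) := by
      rw [h1]
      simp only [LinearMap.comp_apply]
      congr 1
      have := LinearMap.congr_fun h2 (Δ x)
      simpa only [LinearMap.comp_apply] using this
    rw [e2]
    have hξ : ∀ t, superCyclic σ (TensorProduct.map β (TensorProduct.map β β) t)
        = TensorProduct.map β (TensorProduct.map β β) (superCyclic σ t) := by
      intro t
      simpa only [LinearMap.comp_apply] using LinearMap.congr_fun hcyc t
    have h5 := LinearMap.congr_fun hco5 x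
    simp only [LinearMap.comp_apply, LinearMap.add_apply, LinearMap.id_apply,
      LinearMap.zero_apply] at h5
    simp only [hξ, ← map_add]
    rw [h5, map_zero, map_zero]
  · intro p q x y hx hy
    simp only [LinearMap.comp_apply, LinearMap.compr₂_apply]
    rw [hΔβ, hΔβ, hΔβ, hΔβ, hcompat p q x y hx hy, map_sub, map_sub, map_smul, map_smul]
    have key : ∀ (r : ZMod 2) (z : L) (t : L ⊗[K] L),
        adT σ (br.compr₂ β) (β ∘ₗ α) r (β (α z)) (TensorProduct.map β β t)
          = TensorProduct.map β β (TensorProduct.map β β (adT σ br α r (α z) t)) := by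
      intro r z t
      have := LinearMap.congr_fun (aux_adT_twist σ br α β hβσ hβα hβbr r (α z)) t
      simpa only [LinearMap.comp_apply] using this
    rw [key, key]
  · rintro ⟨hm, hc⟩
    constructor
    · intro x y
      simp only [LinearMap.comp_apply, LinearMap.compr₂_apply, hβα, ← hβbr]
      exact congrArg β (congrArg β (hm x y))
    · ext x
      simp only [LinearMap.comp_apply]
      rw [hΔβ, hΔβ, hΔβ]
      have hcx : Δ (α x) = TensorProduct.map α α (Δ x) := by
        simpa only [LinearMap.comp_apply] using LinearMap.congr_fun hc x
      rw [hcx]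
      have haux : ∀ t : L ⊗[K] L,
          TensorProduct.map (β ∘ₗ α) (β ∘ₗ α) (TensorProduct.map β β t)
            = TensorProduct.map β β (TensorProduct.map β β (TensorProduct.map α α t)) := by
        intro t
        induction t using TensorProduct.induction_on with
        | zero => simp
        | tmul a b => simp [hβα]
        | add u v hu hv => simp only [map_add, hu, hv]
      rw [haux]
end

section
/- Let (L, [·,·], Δ, α) be a multiplicative Hom-Lie superbialgebra. Then for every integer n ≥ 0, L_{αⁿ} = (L, αⁿ∘[·,·], Δ∘αⁿ, α^{n+1}) is again a multiplicative Hom-Lie superbialgebra. -/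
open TensorProduct

variable (K : Type*) [Field K] [CharZero K]

variable {K}

section Helpers

set_option linter.unusedSectionVars false
variable {K : Type*} [Field K] [CharZero K] {L : Type*} [AddCommGroup L] [Module K L]

lemma pow_comm_pt (f g : L →ₗ[K] L) (h : ∀ x, f (g x) = g (f x)) (n : ℕ) (x : L) :
    f ((g ^ n) x) = (g ^ n) (f x) := by
  induction n generalizing x with
  | zero => simp
  | succ n ih =>
    rw [pow_succ]
    simp only [Module.End.mul_apply]
    rw [ih, h]

lemma br_pow (br : L →ₗ[K] L →ₗ[K] L) (α : L →ₗ[K] L)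
    (h : IsMultiplicative br α) (n : ℕ) (x y : L) :
    (α ^ n) (br x y) = br ((α ^ n) x) ((α ^ n) y) := by
  induction n generalizing x y with
  | zero => simp
  | succ n ih =>
    rw [pow_succ]
    simp only [Module.End.mul_apply]
    rw [h, ih]

lemma comult_pow (α : L →ₗ[K] L) (Δ : L →ₗ[K] L ⊗[K] L)
    (h : IsComultiplicative α Δ) (n : ℕ) :
    Δ ∘ₗ (α ^ n : L →ₗ[K] L) = TensorProduct.map (α ^ n) (α ^ n) ∘ₗ Δ := by
  induction n with
  | zero =>
    ext x
    simp
  | succ n ih =>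
    rw [pow_succ, Module.End.mul_eq_comp, ← LinearMap.comp_assoc, ih,
      LinearMap.comp_assoc, h, ← LinearMap.comp_assoc, ← TensorProduct.map_comp,
      ← Module.End.mul_eq_comp, ← pow_succ]

lemma signPow_comm (σ f : L →ₗ[K] L) (h : σ ∘ₗ f = f ∘ₗ σ) (p : ZMod 2) :
    signPow σ p ∘ₗ f = f ∘ₗ signPow σ p := by
  simp only [signPow, LinearMap.add_comp, LinearMap.comp_add, LinearMap.smul_comp,
    LinearMap.comp_smul, LinearMap.id_comp, LinearMap.comp_id, h]

lemma signOp_comm {M : Type*} [AddCommGroup M] [Module K M]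
    (σL f : L →ₗ[K] L) (σM g : M →ₗ[K] M)
    (h1 : σL ∘ₗ f = f ∘ₗ σL) (h2 : σM ∘ₗ g = g ∘ₗ σM) :
    signOp σL σM ∘ₗ TensorProduct.map f g = TensorProduct.map f g ∘ₗ signOp σL σM := by
  simp only [signOp, LinearMap.smul_comp, LinearMap.comp_smul, LinearMap.add_comp,
    LinearMap.comp_add, LinearMap.sub_comp, LinearMap.comp_sub, LinearMap.id_comp,
    LinearMap.comp_id, ← TensorProduct.map_comp, h1, h2]

lemma superCyclic_comm (σ f : L →ₗ[K] L) (h : σ ∘ₗ f = f ∘ₗ σ) :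
    superCyclic σ ∘ₗ TensorProduct.map f (TensorProduct.map f f)
      = TensorProduct.map f (TensorProduct.map f f) ∘ₗ superCyclic σ := by
  have h2 : TensorProduct.map σ σ ∘ₗ TensorProduct.map f f
      = TensorProduct.map f f ∘ₗ TensorProduct.map σ σ := by
    rw [← TensorProduct.map_comp, ← TensorProduct.map_comp, h]
  unfold superCyclic
  rw [LinearMap.comp_assoc, LinearMap.comp_assoc, signOp_comm σ f _ _ h h2,
    ← LinearMap.comp_assoc _ (TensorProduct.map f (TensorProduct.map f f)),
    ← TensorProduct.map_comp_comm_eq, ← LinearMap.comp_assoc,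
    ← LinearMap.comp_assoc, ← TensorProduct.map_map_comp_assoc_eq,
    LinearMap.comp_assoc, LinearMap.comp_assoc]

end Helpers

/-- A multiplicative Hom-Lie superbialgebra yields an infinite
sequence of multiplicative Hom-Lie superbialgebras `L_{αⁿ}`. -/
theorem multHomLieSuperbialgebra_pow_twist
    {K : Type*} [Field K] [CharZero K] {L : Type*} [AddCommGroup L] [Module K L]
    (σ : L →ₗ[K] L) (br : L →ₗ[K] L →ₗ[K] L) (α : L →ₗ[K] L) (Δ : L →ₗ[K] L ⊗[K] L)
    (hbi : IsMultHomLieSuperbialgebra σ br α Δ) (n : ℕ) :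
    IsMultHomLieSuperbialgebra σ (br.compr₂ (α ^ n)) (α ^ (n + 1)) (Δ ∘ₗ (α ^ n)) := by
  obtain ⟨⟨⟨hσσ, hσbr, hσα, hskew, hjac⟩, ⟨-, -, hσΔ, him, hcojac⟩, hcompat⟩, hmul, hcomul⟩ := hbi
  set β : L →ₗ[K] L := (α ^ n : L →ₗ[K] L) with hβdef
  set γ : L →ₗ[K] L := (α ^ (2 * n) : L →ₗ[K] L) with hγdef
  -- basic commutation facts
  have hσβpt : ∀ x, σ (β x) = β (σ x) := fun x => pow_comm_pt σ α hσα n x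
  have hσβ : σ ∘ₗ β = β ∘ₗ σ := LinearMap.ext hσβpt
  have hβbr : ∀ x y, β (br x y) = br (β x) (β y) := br_pow br α hmul n
  have hβΔ : Δ ∘ₗ β = TensorProduct.map β β ∘ₗ Δ := comult_pow α Δ hcomul n
  have hβΔpt : ∀ x, Δ (β x) = TensorProduct.map β β (Δ x) :=
    fun x => DFunLike.congr_fun hβΔ x
  have hγ : β ∘ₗ β = γ := by
    rw [hβdef, hγdef, ← Module.End.mul_eq_comp, ← pow_add, two_mul]
  have hγpt : ∀ w, γ w = β (β w) := fun w => (DFunLike.congr_fun hγ w).symm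
  have hσγ : σ ∘ₗ γ = γ ∘ₗ σ := by
    rw [← hγ, ← LinearMap.comp_assoc, hσβ, LinearMap.comp_assoc, hσβ,
      ← LinearMap.comp_assoc]
  have hα'x : ∀ x, (α ^ (n + 1)) x = β (α x) := by
    intro x; rw [pow_succ, Module.End.mul_apply]
  have hα'β : (α ^ (n + 1) : L →ₗ[K] L) ∘ₗ β = γ ∘ₗ α := by
    rw [hβdef, hγdef, ← Module.End.mul_eq_comp, ← Module.End.mul_eq_comp, ← pow_add,
      ← pow_succ]
    congr 1
    ring
  have hβα' : β ∘ₗ (α ^ (n + 1) : L →ₗ[K] L) = (α ^ (n + 1) : L →ₗ[K] L) ∘ₗ β := by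
    rw [hβdef, ← Module.End.mul_eq_comp, ← Module.End.mul_eq_comp, pow_mul_comm]
  have hcommpt : ∀ z, (α ^ (n + 1)) (β z) = β ((α ^ (n + 1)) z) :=
    fun z => (DFunLike.congr_fun hβα' z).symm
  -- the twisted adjoint action
  have hadT : ∀ (p : ZMod 2) (a : L),
      adT σ (br.compr₂ β) (α ^ (n + 1)) p ((α ^ (n + 1)) a) ∘ₗ TensorProduct.map β β
        = TensorProduct.map γ γ ∘ₗ adT σ br α p (α a) := by
    intro p a
    have hA : (br.compr₂ β) ((α ^ (n + 1)) a) ∘ₗ β = γ ∘ₗ br (α a) := by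
      ext z
      simp only [LinearMap.comp_apply, LinearMap.compr₂_apply]
      rw [hα'x, ← hβbr]
      exact (hγpt _).symm
    have hC : ((α ^ (n + 1) : L →ₗ[K] L) ∘ₗ signPow σ p) ∘ₗ β
        = γ ∘ₗ (α ∘ₗ signPow σ p) := by
      rw [LinearMap.comp_assoc, signPow_comm σ β hσβ p, ← LinearMap.comp_assoc, hα'β,
        LinearMap.comp_assoc]
    simp only [adT, LinearMap.add_comp, LinearMap.comp_add, ← TensorProduct.map_comp,
      hA, hα'β, hC]
  have hadTpt : ∀ (p : ZMod 2) (a : L) (t : L ⊗[K] L),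
      adT σ (br.compr₂ β) (α ^ (n + 1)) p ((α ^ (n + 1)) a) (TensorProduct.map β β t)
        = TensorProduct.map γ γ (adT σ br α p (α a) t) :=
    fun p a t => DFunLike.congr_fun (hadT p a) t
  have hγγpt : ∀ t : L ⊗[K] L,
      TensorProduct.map γ γ t = TensorProduct.map β β (TensorProduct.map β β t) := by
    intro t
    rw [← hγ, TensorProduct.map_comp, LinearMap.comp_apply]
  refine ⟨⟨⟨hσσ, ?_, ?_, ?_, ?_⟩, ⟨hσσ, ?_, ?_, ?_, ?_⟩, ?_⟩, ?_, ?_⟩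
  · -- σ commutes with the new bracket
    intro x y
    simp only [LinearMap.compr₂_apply]
    rw [hσβpt, hσbr]
  · -- σ commutes with the new α
    intro x
    exact pow_comm_pt σ α hσα (n + 1) x
  · -- skew-supersymmetry
    intro p q x y hx hy
    simp only [LinearMap.compr₂_apply]
    rw [hskew p q x y hx hy, LinearMap.map_smul]
  · -- super Hom-Jacobi
    intro p q r x y z hx hy hz
    have key : ∀ a b c : L,
        (br.compr₂ β) ((α ^ (n + 1)) a) ((br.compr₂ β) b c)
          = β (β (br (α a) (br b c))) := by
      intro a b c
      simp only [LinearMap.compr₂_apply]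
      rw [hα'x, ← hβbr]
    rw [key x y z, key z x y, key y z x]
    calc eps K p r • β (β (br (α x) (br y z))) + eps K r q • β (β (br (α z) (br x y)))
          + eps K q p • β (β (br (α y) (br z x)))
        = β (β (eps K p r • br (α x) (br y z) + eps K r q • br (α z) (br x y)
            + eps K q p • br (α y) (br z x))) := by
          simp only [map_add, LinearMap.map_smul]
      _ = 0 := by rw [hjac p q r x y z hx hy hz, LinearMap.map_zero, LinearMap.map_zero]
  · -- σ commutes with the new α (coalgebra part)
    intro x
    exact pow_comm_pt σ α hσα (n + 1) x
  · -- map σ σ ∘ Δ' = Δ' ∘ σ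
    rw [← LinearMap.comp_assoc, hσΔ, LinearMap.comp_assoc, hσβ,
      ← LinearMap.comp_assoc]
  · -- image of Δ'
    intro x
    exact him (β x)
  · -- co-Jacobi
    have hΔβ2 : (TensorProduct.map β β ∘ₗ Δ) ∘ₗ β = TensorProduct.map γ γ ∘ₗ Δ := by
      rw [LinearMap.comp_assoc, hβΔ, ← LinearMap.comp_assoc, ← TensorProduct.map_comp, hγ]
    have hmid : TensorProduct.map (α ^ (n + 1) : L →ₗ[K] L) (Δ ∘ₗ β) ∘ₗ (Δ ∘ₗ β)
        = TensorProduct.map γ (TensorProduct.map γ γ)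
            ∘ₗ (TensorProduct.map α Δ ∘ₗ Δ) := by
      rw [hβΔ, ← LinearMap.comp_assoc, ← TensorProduct.map_comp, hα'β, hΔβ2,
        TensorProduct.map_comp, LinearMap.comp_assoc]
    have hcyc := superCyclic_comm σ γ hσγ
    have h2 : (superCyclic σ ∘ₗ superCyclic σ)
          ∘ₗ TensorProduct.map γ (TensorProduct.map γ γ)
        = TensorProduct.map γ (TensorProduct.map γ γ)
          ∘ₗ (superCyclic σ ∘ₗ superCyclic σ) := by
      rw [LinearMap.comp_assoc, hcyc, ← LinearMap.comp_assoc, hcyc,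
        LinearMap.comp_assoc]
    rw [hmid, ← LinearMap.comp_assoc]
    have hST : (LinearMap.id + superCyclic σ + superCyclic σ ∘ₗ superCyclic σ)
          ∘ₗ TensorProduct.map γ (TensorProduct.map γ γ)
        = TensorProduct.map γ (TensorProduct.map γ γ)
          ∘ₗ (LinearMap.id + superCyclic σ + superCyclic σ ∘ₗ superCyclic σ) := by
      simp only [LinearMap.add_comp, LinearMap.comp_add, LinearMap.id_comp,
        LinearMap.comp_id, hcyc, h2]
    rw [hST, LinearMap.comp_assoc, hcojac, LinearMap.comp_zero]
  · -- compatibility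
    intro p q x y hx hy
    simp only [LinearMap.comp_apply, LinearMap.compr₂_apply, hβΔpt]
    rw [hcompat p q x y hx hy]
    simp only [hadTpt, map_sub, LinearMap.map_smul, hγγpt]
  · -- multiplicativity
    intro x y
    simp only [LinearMap.compr₂_apply]
    rw [← br_pow br α hmul (n + 1) x y, hcommpt]
  · -- co-multiplicativity
    unfold IsComultiplicative
    rw [LinearMap.comp_assoc, hβα', ← LinearMap.comp_assoc,
      comult_pow α Δ hcomul (n + 1), LinearMap.comp_assoc]
end

section
/- Let g and h be Lie superbialgebras, and let α : g → g and β : h → h be Lie superbialgebra morphisms such that β and β^{⊗2} are injective. Then the following are equivalent: (1) the Hom-Lie superbialgebras g_α = (g, α∘[·,·]_g, Δ_g∘α, α) and h_β = (h, β∘[·,·]_h, Δ_h∘β, β) are isomorphic; (2) there exists a Lie superbialgebra isomorphism γ : g → h such that γ∘α = β∘γ. -/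
open TensorProduct

variable (K : Type*) [Field K] [CharZero K]

variable {K}

/-- `g_α ≅ h_β` iff there is a Lie superbialgebra isomorphism
`γ : g → h` intertwining `α` and `β`. -/
theorem homLieSuperbialgebra_twist_iso_iff
    {K : Type*} [Field K] [CharZero K]
    {G : Type*} [AddCommGroup G] [Module K G] {H : Type*} [AddCommGroup H] [Module K H]
    (σg : G →ₗ[K] G) (brg : G →ₗ[K] G →ₗ[K] G) (Δg : G →ₗ[K] G ⊗[K] G)
    (σh : H →ₗ[K] H) (brh : H →ₗ[K] H →ₗ[K] H) (Δh : H →ₗ[K] H ⊗[K] H)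
    (hg : IsHomLieSuperbialgebra σg brg (LinearMap.id : G →ₗ[K] G) Δg)
    (hh : IsHomLieSuperbialgebra σh brh (LinearMap.id : H →ₗ[K] H) Δh)
    (α : G →ₗ[K] G) (β : H →ₗ[K] H)
    (hα : IsBialgMorphism σg brg LinearMap.id Δg σg brg LinearMap.id Δg α)
    (hβ : IsBialgMorphism σh brh LinearMap.id Δh σh brh LinearMap.id Δh β)
    (hβinj : Function.Injective β)
    (hβ2inj : Function.Injective (TensorProduct.map β β)) :
    (∃ γ : G ≃ₗ[K] H,
        IsBialgMorphism σg (brg.compr₂ α) α (Δg ∘ₗ α)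
          σh (brh.compr₂ β) β (Δh ∘ₗ β) γ.toLinearMap)
      ↔ (∃ γ : G ≃ₗ[K] H,
          IsBialgMorphism σg brg LinearMap.id Δg σh brh LinearMap.id Δh γ.toLinearMap
            ∧ γ.toLinearMap ∘ₗ α = β ∘ₗ γ.toLinearMap) := by
  obtain ⟨_, hαα, hαbr, hαΔ⟩ := hα
  obtain ⟨_, hβα, hβbr, hβΔ⟩ := hβ
  constructor
  · rintro ⟨γ, hσ, hαβ, hbr, hΔ⟩
    have hcomm : γ.toLinearMap ∘ₗ α = β ∘ₗ γ.toLinearMap :=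
      LinearMap.ext fun x => (hαβ x).symm
    refine ⟨γ, ⟨hσ, fun x => rfl, fun x y => ?_, ?_⟩, hcomm⟩
    · apply hβinj
      have h1 := hbr x y
      simp only [LinearMap.compr₂_apply] at h1
      rw [hαβ, h1]
    · apply LinearMap.ext; intro x
      apply hβ2inj
      have e1 : TensorProduct.map β β ∘ₗ
          (TensorProduct.map γ.toLinearMap γ.toLinearMap ∘ₗ Δg)
          = TensorProduct.map γ.toLinearMap γ.toLinearMap
            ∘ₗ TensorProduct.map α α ∘ₗ Δg := by
        rw [← LinearMap.comp_assoc, ← LinearMap.comp_assoc,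
          ← TensorProduct.map_comp, ← TensorProduct.map_comp, ← hcomm]
      have this1 := LinearMap.congr_fun e1 x
      have hA := LinearMap.congr_fun hαΔ x
      have h2 := LinearMap.congr_fun hΔ x
      have h3 := LinearMap.congr_fun hβΔ (γ x)
      simp only [LinearMap.comp_apply] at this1 hA h2 h3 ⊢
      rw [this1, hA, h2]; exact h3.symm
  · rintro ⟨γ, ⟨hσ, -, hbr, hΔ⟩, hcomm⟩
    refine ⟨γ, hσ, fun x => LinearMap.congr_fun hcomm.symm x, fun x y => ?_, ?_⟩
    · simp only [LinearMap.compr₂_apply]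
      have := LinearMap.congr_fun hcomm (brg x y)
      simp only [LinearMap.comp_apply] at this
      rw [this, hbr]
    · have e1 : TensorProduct.map γ.toLinearMap γ.toLinearMap ∘ₗ (Δg ∘ₗ α)
          = TensorProduct.map γ.toLinearMap γ.toLinearMap
            ∘ₗ TensorProduct.map α α ∘ₗ Δg := by rw [hαΔ]
      rw [e1, ← LinearMap.comp_assoc, ← TensorProduct.map_comp, hcomm,
        TensorProduct.map_comp, LinearMap.comp_assoc, hΔ,
        ← LinearMap.comp_assoc, hβΔ, LinearMap.comp_assoc]
end

section
/- Let g be a Lie superbialgebra and let α, β ∈ Aut(g), the group of Lie superbialgebra automorphisms of g. Then the Hom-Lie superbialgebras g_α = (g, α∘[·,·], Δ∘α, α) and g_β = (g, β∘[·,·], Δ∘β, β) are isomorphic if and only if α and β are conjugate in Aut(g). -/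
open TensorProduct

variable (K : Type*) [Field K] [CharZero K]

variable {K}

/-- For automorphisms `α, β` of a Lie superbialgebra `g`,
`g_α ≅ g_β` iff `α` and `β` are conjugate in `Aut(g)`. -/
theorem homLieSuperbialgebra_twist_iso_iff_conjugate
    {K : Type*} [Field K] [CharZero K] {G : Type*} [AddCommGroup G] [Module K G]
    (σ : G →ₗ[K] G) (br : G →ₗ[K] G →ₗ[K] G) (Δ : G →ₗ[K] G ⊗[K] G)
    (hg : IsHomLieSuperbialgebra σ br (LinearMap.id : G →ₗ[K] G) Δ)
    (α β : G ≃ₗ[K] G)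
    (hα : IsBialgMorphism σ br LinearMap.id Δ σ br LinearMap.id Δ α.toLinearMap)
    (hβ : IsBialgMorphism σ br LinearMap.id Δ σ br LinearMap.id Δ β.toLinearMap) :
    (∃ γ : G ≃ₗ[K] G,
        IsBialgMorphism σ (br.compr₂ α.toLinearMap) α.toLinearMap (Δ ∘ₗ α.toLinearMap)
          σ (br.compr₂ β.toLinearMap) β.toLinearMap (Δ ∘ₗ β.toLinearMap) γ.toLinearMap)
      ↔ (∃ γ : G ≃ₗ[K] G,
          IsBialgMorphism σ br LinearMap.id Δ σ br LinearMap.id Δ γ.toLinearMap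
            ∧ γ.toLinearMap ∘ₗ α.toLinearMap = β.toLinearMap ∘ₗ γ.toLinearMap) := by
  constructor
  · rintro ⟨γ, hσ, hαβ, hbr, hΔ⟩
    simp only [LinearEquiv.coe_coe] at hαβ
    refine ⟨γ, ⟨hσ, fun x => rfl, ?_, ?_⟩, ?_⟩
    · intro x y
      simp only [LinearEquiv.coe_coe]
      apply β.injective
      have h1 := hbr x y
      simp only [LinearMap.compr₂_apply, LinearEquiv.coe_coe] at h1
      rw [hαβ (br x y)]
      exact h1
    · ext x
      have h := LinearMap.congr_fun hΔ (α.symm x)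
      simp only [LinearMap.comp_apply, LinearEquiv.coe_coe,
        LinearEquiv.apply_symm_apply] at h ⊢
      rw [h, hαβ (α.symm x), LinearEquiv.apply_symm_apply]
    · ext x
      simp only [LinearMap.comp_apply, LinearEquiv.coe_coe]
      exact (hαβ x).symm
  · rintro ⟨γ, ⟨hσ, _, hbr, hΔ⟩, hc⟩
    have hc' : ∀ x : G, γ (α x) = β (γ x) := fun x => by
      have := LinearMap.congr_fun hc x
      simpa using this
    simp only [LinearEquiv.coe_coe] at hbr
    refine ⟨γ, hσ, fun x => (hc' x).symm, ?_, ?_⟩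
    · intro x y
      simp only [LinearMap.compr₂_apply, LinearEquiv.coe_coe]
      rw [hc' (br x y), hbr x y]
    · ext x
      have h := LinearMap.congr_fun hΔ (α x)
      simp only [LinearMap.comp_apply, LinearEquiv.coe_coe] at h ⊢
      rw [h, hc' x]
end

section
/- Let g be a Lie superbialgebra. Then there is a bijection between (1) the set of isomorphism classes of Hom-Lie superbialgebras g_α = (g, α∘[·,·], Δ∘α, α) with α an invertible Lie superbialgebra morphism, and (2) the set of conjugacy classes in the group Aut(g) of Lie superbialgebra automorphisms of g. -/
open TensorProduct

variable (K : Type*) [Field K] [CharZero K]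

variable {K}

/-- For a Lie superbialgebra `g`, isomorphism classes of
Hom-Lie superbialgebras `g_α` (with `α` an invertible Lie superbialgebra morphism)
are in bijection with conjugacy classes in `Aut(g)`. -/
theorem homLieSuperbialgebra_twist_classes_equiv_conjugacy_classes
    {K : Type*} [Field K] [CharZero K] {G : Type*} [AddCommGroup G] [Module K G]
    (σ : G →ₗ[K] G) (br : G →ₗ[K] G →ₗ[K] G) (Δ : G →ₗ[K] G ⊗[K] G)
    (hg : IsHomLieSuperbialgebra σ br (LinearMap.id : G →ₗ[K] G) Δ) :
    Nonempty (
      Quot (fun (a b : {e : G ≃ₗ[K] G //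
          IsBialgMorphism σ br LinearMap.id Δ σ br LinearMap.id Δ e.toLinearMap}) =>
        ∃ γ : G ≃ₗ[K] G,
          IsBialgMorphism σ (br.compr₂ a.1.toLinearMap) a.1.toLinearMap (Δ ∘ₗ a.1.toLinearMap)
            σ (br.compr₂ b.1.toLinearMap) b.1.toLinearMap (Δ ∘ₗ b.1.toLinearMap) γ.toLinearMap)
      ≃
      Quot (fun (a b : {e : G ≃ₗ[K] G //
          IsBialgMorphism σ br LinearMap.id Δ σ br LinearMap.id Δ e.toLinearMap}) =>
        ∃ γ : {e : G ≃ₗ[K] G //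
          IsBialgMorphism σ br LinearMap.id Δ σ br LinearMap.id Δ e.toLinearMap},
          γ.1.toLinearMap ∘ₗ a.1.toLinearMap = b.1.toLinearMap ∘ₗ γ.1.toLinearMap)) := by
  refine ⟨Quot.congr (Equiv.refl _) fun a b => ?_⟩
  simp only [Equiv.refl_apply]
  constructor
  · rintro ⟨γ, hσ, hα, hbr, hΔ⟩
    have hcomm : b.1.toLinearMap ∘ₗ γ.toLinearMap = γ.toLinearMap ∘ₗ a.1.toLinearMap :=
      LinearMap.ext hα
    refine ⟨⟨γ, hσ, fun x => rfl, fun x y => ?_, ?_⟩, hcomm.symm⟩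
    · -- bracket
      apply b.1.injective
      have h := hbr x y
      simp only [LinearMap.compr₂_apply] at h
      have h2 := hα (br x y)
      calc b.1 (γ (br x y)) = γ (a.1 (br x y)) := h2
        _ = b.1 (br (γ x) (γ y)) := h
    · -- cobracket
      ext z
      have h := LinearMap.congr_fun hΔ (a.1.symm z)
      simp only [LinearMap.comp_apply, LinearMap.coe_comp, Function.comp_apply] at h ⊢
      simp only [LinearEquiv.coe_coe, LinearEquiv.apply_symm_apply] at h
      rw [h]
      exact congrArg Δ ((hα (a.1.symm z)).trans (congrArg _ (a.1.apply_symm_apply z)))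
  · rintro ⟨⟨γ, hγσ, hγα, hγbr, hγΔ⟩, hconj⟩
    refine ⟨γ, hγσ, fun x => LinearMap.congr_fun hconj.symm x, fun x y => ?_, ?_⟩
    · simp only [LinearMap.compr₂_apply]
      have hc : γ (a.1 (br x y)) = b.1 (γ (br x y)) := LinearMap.congr_fun hconj (br x y)
      exact hc.trans (congrArg b.1 (hγbr x y))
    · ext z
      simp only [LinearMap.coe_comp, Function.comp_apply, LinearEquiv.coe_coe]
      have h := LinearMap.congr_fun hγΔ (a.1 z)
      simp only [LinearMap.coe_comp, Function.comp_apply, LinearEquiv.coe_coe,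
        LinearMap.id_coe, id_eq] at h ⊢
      have hc : γ (a.1 z) = b.1 (γ z) := LinearMap.congr_fun hconj z
      rw [h]
      exact congrArg Δ hc
end

section
/- Let (L, [·,·], Δ = ad(r), α, r) be a coboundary Hom-Lie superbialgebra and let β : L → L be an even morphism of Hom-Lie superbialgebras such that β^{⊗2}(r) = r. Then L_β = (L, β∘[·,·], Δ∘β, βα, r) is also a coboundary Hom-Lie superbialgebra, which is multiplicative if L is; moreover, if L is quasi-triangular then so is L_β (i.e. r also satisfies the CHYBE with respect to the bracket β∘[·,·] and the map βα). -/
open TensorProduct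

variable (K : Type*) [Field K] [CharZero K]

variable {K}

/-- Twisting a coboundary (resp. quasi-triangular) Hom-Lie
superbialgebra by a morphism fixing `r`. -/
theorem coboundaryHomLieSuperbialgebra_twist
    {K : Type*} [Field K] [CharZero K] {L : Type*} [AddCommGroup L] [Module K L]
    (σ : L →ₗ[K] L) (br : L →ₗ[K] L →ₗ[K] L) (α : L →ₗ[K] L) (Δ : L →ₗ[K] L ⊗[K] L)
    (r : L ⊗[K] L)
    (hc : IsCoboundary σ br α Δ r)
    (β : L →ₗ[K] L)
    (hβσ : ∀ x, σ (β x) = β (σ x))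
    (hβα : ∀ x, α (β x) = β (α x))
    (hβbr : ∀ x y, β (br x y) = br (β x) (β y))
    (hβΔ : TensorProduct.map β β ∘ₗ Δ = Δ ∘ₗ β)
    (hβr : TensorProduct.map β β r = r) :
    IsCoboundary σ (br.compr₂ β) (β ∘ₗ α) (Δ ∘ₗ β) r
      ∧ (IsMultiplicative br α ∧ IsComultiplicative α Δ →
          IsMultiplicative (br.compr₂ β) (β ∘ₗ α)
            ∧ IsComultiplicative (β ∘ₗ α) (Δ ∘ₗ β))
      ∧ (IsQuasiTriangular σ br α Δ r →
          IsQuasiTriangular σ (br.compr₂ β) (β ∘ₗ α) (Δ ∘ₗ β) r) := by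
  obtain ⟨⟨⟨hσσ, hσbr, hσα, hskew, hjac⟩, ⟨-, hσαc, hσΔ, hcoskew, hcojac⟩, hcompat⟩,
    hrinv, hΔr⟩ := hc
  -- basic commutation facts
  have hσβc : σ ∘ₗ β = β ∘ₗ σ := LinearMap.ext hβσ
  have hαβc : α ∘ₗ β = β ∘ₗ α := LinearMap.ext hβα
  have hhom : ∀ (p : ZMod 2) x, IsHomog σ p x → IsHomog σ p (β x) := by
    intro p x hx
    unfold IsHomog at *
    rw [hβσ, hx, map_smul]
  have hspβ : ∀ (p : ZMod 2) y, signPow σ p (β y) = β (signPow σ p y) := by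
    intro p y
    simp [signPow, hβσ]
  have hβΔ' : ∀ z, TensorProduct.map β β (Δ z) = Δ (β z) :=
    fun z => LinearMap.congr_fun hβΔ z
  have hadT1 : ∀ (p : ZMod 2) x, adT σ (br.compr₂ β) (β ∘ₗ α) p x
      = TensorProduct.map β β ∘ₗ adT σ br α p x := by
    intro p x
    apply TensorProduct.ext'
    intro y z
    simp [adT]
  have hadT2 : ∀ (p : ZMod 2) x, TensorProduct.map β β ∘ₗ adT σ br α p x
      = adT σ br α p (β x) ∘ₗ TensorProduct.map β β := by
    intro p x
    apply TensorProduct.ext'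
    intro y z
    simp [adT, hβbr, hβα, hspβ]
  -- naturality of the structural maps w.r.t. β
  have hmapσβ : TensorProduct.map σ σ ∘ₗ TensorProduct.map β β
      = TensorProduct.map β β ∘ₗ TensorProduct.map σ σ := by
    rw [← TensorProduct.map_comp, ← TensorProduct.map_comp, hσβc]
  have hS : signOp σ (TensorProduct.map σ σ) ∘ₗ TensorProduct.map β (TensorProduct.map β β)
      = TensorProduct.map β (TensorProduct.map β β) ∘ₗ signOp σ (TensorProduct.map σ σ) := by
    unfold signOp
    simp only [LinearMap.smul_comp, LinearMap.comp_smul, LinearMap.add_comp,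
      LinearMap.comp_add, LinearMap.sub_comp, LinearMap.comp_sub, LinearMap.id_comp,
      LinearMap.comp_id, ← TensorProduct.map_comp, hσβc, hmapσβ]
  have hcommB : (TensorProduct.comm K L (L ⊗[K] L)).toLinearMap
        ∘ₗ TensorProduct.map β (TensorProduct.map β β)
      = TensorProduct.map (TensorProduct.map β β) β
        ∘ₗ (TensorProduct.comm K L (L ⊗[K] L)).toLinearMap := by
    apply TensorProduct.ext'
    intro x y
    simp
  have hassocB : (TensorProduct.assoc K L L L).toLinearMap
        ∘ₗ TensorProduct.map (TensorProduct.map β β) β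
      = TensorProduct.map β (TensorProduct.map β β)
        ∘ₗ (TensorProduct.assoc K L L L).toLinearMap := by
    apply TensorProduct.ext_threefold
    intro x y z
    simp
  have hcycB : superCyclic σ ∘ₗ TensorProduct.map β (TensorProduct.map β β)
      = TensorProduct.map β (TensorProduct.map β β) ∘ₗ superCyclic σ := by
    unfold superCyclic
    rw [LinearMap.comp_assoc, LinearMap.comp_assoc, hS, ← LinearMap.comp_assoc
      (signOp σ (TensorProduct.map σ σ)), hcommB,
      LinearMap.comp_assoc, ← LinearMap.comp_assoc _ _ (TensorProduct.assoc K L L L).toLinearMap,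
      hassocB, LinearMap.comp_assoc]
  -- the new superalgebra
  have halg' : IsHomLieSuperalgebra σ (br.compr₂ β) (β ∘ₗ α) := by
    refine ⟨hσσ, ?_, ?_, ?_, ?_⟩
    · intro x y
      simp only [LinearMap.compr₂_apply]
      rw [hβσ, hσbr]
    · intro x
      simp only [LinearMap.comp_apply]
      rw [hβσ, hσα]
    · intro p q x y hx hy
      simp only [LinearMap.compr₂_apply]
      rw [hskew p q x y hx hy]
      simp
    · intro p q t x y z hx hy hz
      have h0 := hjac p q t (β x) (β y) (β z) (hhom p x hx) (hhom q y hy) (hhom t z hz)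
      have h1 := congrArg β h0
      simp only [map_add, map_smul, map_zero] at h1
      simp only [LinearMap.compr₂_apply, LinearMap.comp_apply, hβbr, hβα] at h1 ⊢
      exact h1
  -- the new supercoalgebra
  have hco' : IsHomLieSupercoalgebra σ (β ∘ₗ α) (Δ ∘ₗ β) := by
    refine ⟨hσσ, ?_, ?_, ?_, ?_⟩
    · intro x
      simp only [LinearMap.comp_apply]
      rw [hβσ, hσαc]
    · rw [← LinearMap.comp_assoc, hσΔ, LinearMap.comp_assoc, hσβc,
        LinearMap.comp_assoc]
    · intro x
      obtain ⟨u, hu⟩ := hcoskew (β x)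
      exact ⟨u, by simpa using hu⟩
    · have hmap1 : TensorProduct.map (β ∘ₗ α) (Δ ∘ₗ β)
          = TensorProduct.map β (TensorProduct.map β β) ∘ₗ TensorProduct.map α Δ := by
        rw [← hβΔ, TensorProduct.map_comp]
      have hmap2 : TensorProduct.map α Δ ∘ₗ TensorProduct.map β β
          = TensorProduct.map β (TensorProduct.map β β) ∘ₗ TensorProduct.map α Δ := by
        rw [← TensorProduct.map_comp, hαβc, ← hβΔ, TensorProduct.map_comp]
      have hΔ'c : (Δ ∘ₗ β : L →ₗ[K] L ⊗[K] L) = TensorProduct.map β β ∘ₗ Δ := hβΔ.symm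
      have hmap2' : TensorProduct.map α Δ ∘ₗ (TensorProduct.map β β ∘ₗ Δ)
          = TensorProduct.map β (TensorProduct.map β β) ∘ₗ (TensorProduct.map α Δ ∘ₗ Δ) := by
        rw [← LinearMap.comp_assoc, hmap2, LinearMap.comp_assoc]
      have hXB : ∀ (g : L →ₗ[K] L ⊗[K] (L ⊗[K] L)),
          (LinearMap.id + superCyclic σ + superCyclic σ ∘ₗ superCyclic σ)
            ∘ₗ (TensorProduct.map β (TensorProduct.map β β) ∘ₗ g)
          = TensorProduct.map β (TensorProduct.map β β)
            ∘ₗ ((LinearMap.id + superCyclic σ + superCyclic σ ∘ₗ superCyclic σ) ∘ₗ g) := by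
        intro g
        have hX : (LinearMap.id + superCyclic σ + superCyclic σ ∘ₗ superCyclic σ)
              ∘ₗ TensorProduct.map β (TensorProduct.map β β)
            = TensorProduct.map β (TensorProduct.map β β)
              ∘ₗ (LinearMap.id + superCyclic σ + superCyclic σ ∘ₗ superCyclic σ) := by
          simp only [LinearMap.add_comp, LinearMap.comp_add, LinearMap.id_comp,
            LinearMap.comp_id]
          rw [hcycB, LinearMap.comp_assoc, hcycB, ← LinearMap.comp_assoc, hcycB,
            LinearMap.comp_assoc]
        rw [← LinearMap.comp_assoc, hX, LinearMap.comp_assoc]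
      rw [hmap1, hΔ'c]
      simp only [LinearMap.comp_assoc]
      rw [hmap2', hXB, hXB, hcojac, LinearMap.comp_zero, LinearMap.comp_zero]
  -- the compatibility condition
  have hcompat' : ∀ p q x y, IsHomog σ p x → IsHomog σ q y →
      (Δ ∘ₗ β) ((br.compr₂ β) x y)
        = adT σ (br.compr₂ β) (β ∘ₗ α) p ((β ∘ₗ α) x) ((Δ ∘ₗ β) y)
          - eps K p q • adT σ (br.compr₂ β) (β ∘ₗ α) q ((β ∘ₗ α) y) ((Δ ∘ₗ β) x) := by
    intro p q x y hx hy
    have hc2 := hcompat p q (β (β x)) (β (β y)) (hhom p _ (hhom p x hx)) (hhom q _ (hhom q y hy))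
    have e1 : adT σ (br.compr₂ β) (β ∘ₗ α) p ((β ∘ₗ α) x) ((Δ ∘ₗ β) y)
        = adT σ br α p (β (β (α x))) (Δ (β (β y))) := by
      have h := LinearMap.congr_fun (hadT2 p (β (α x))) (Δ (β y))
      simp only [LinearMap.comp_apply] at h
      rw [hadT1]
      simp only [LinearMap.comp_apply]
      rw [h, hβΔ']
    have e2 : adT σ (br.compr₂ β) (β ∘ₗ α) q ((β ∘ₗ α) y) ((Δ ∘ₗ β) x)
        = adT σ br α q (β (β (α y))) (Δ (β (β x))) := by
      have h := LinearMap.congr_fun (hadT2 q (β (α y))) (Δ (β x))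
      simp only [LinearMap.comp_apply] at h
      rw [hadT1]
      simp only [LinearMap.comp_apply]
      rw [h, hβΔ']
    have hLHS : (Δ ∘ₗ β) ((br.compr₂ β) x y) = Δ (br (β (β x)) (β (β y))) := by
      simp only [LinearMap.comp_apply, LinearMap.compr₂_apply, hβbr]
    rw [hLHS, e1, e2, hc2]
    simp only [hβα]
  -- coboundary condition
  have hcob' : ∀ (p : ZMod 2) x, IsHomog σ p x →
      (Δ ∘ₗ β) x = adT σ (br.compr₂ β) (β ∘ₗ α) p x r := by
    intro p x hx
    rw [hadT1, LinearMap.comp_apply,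
      LinearMap.congr_fun (hadT2 p x) r, LinearMap.comp_apply, hβr]
    exact hΔr p (β x) (hhom p x hx)
  have hrinv' : TensorProduct.map (β ∘ₗ α) (β ∘ₗ α) r = r := by
    rw [TensorProduct.map_comp, LinearMap.comp_apply, hrinv, hβr]
  refine ⟨⟨⟨halg', hco', hcompat'⟩, hrinv', hcob'⟩, ?_, ?_⟩
  · rintro ⟨hmult, hcomult⟩
    have hm : ∀ x y, α (br x y) = br (α x) (α y) := hmult
    constructor
    · intro x y
      simp only [LinearMap.comp_apply, LinearMap.compr₂_apply, hβα, hm, hβbr]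
    · apply LinearMap.ext
      intro x
      have hca : ∀ z, TensorProduct.map α α (Δ z) = Δ (α z) :=
        fun z => (LinearMap.congr_fun hcomult z).symm
      simp only [LinearMap.comp_apply, TensorProduct.map_comp β β α α, hca, hβΔ', hβα]
  · rintro ⟨-, hybe⟩
    refine ⟨⟨⟨halg', hco', hcompat'⟩, hrinv', hcob'⟩, ?_⟩
    have hlift : TensorProduct.lift (br.compr₂ β) = β ∘ₗ TensorProduct.lift br :=
      TensorProduct.lift_compr₂ (f := br) β
    have hmapαα : TensorProduct.map (β ∘ₗ α) (β ∘ₗ α)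
        = TensorProduct.map β β ∘ₗ TensorProduct.map α α := TensorProduct.map_comp β β α α
    have h12 : br1213 σ (br.compr₂ β) (β ∘ₗ α) r r
        = TensorProduct.map β (TensorProduct.map β β) (br1213 σ br α r r) := by
      unfold br1213
      rw [hlift, hmapαα, TensorProduct.map_comp, LinearMap.comp_apply]
    have h23 : br1223 (br.compr₂ β) (β ∘ₗ α) r r
        = TensorProduct.map β (TensorProduct.map β β) (br1223 br α r r) := by
      unfold br1223
      rw [hlift]
      have : TensorProduct.map (β ∘ₗ TensorProduct.lift br) (β ∘ₗ α)
            ∘ₗ (TensorProduct.assoc K L L L).symm.toLinearMap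
          = TensorProduct.map β β ∘ₗ (TensorProduct.map (TensorProduct.lift br) α
            ∘ₗ (TensorProduct.assoc K L L L).symm.toLinearMap) := by
        rw [TensorProduct.map_comp, LinearMap.comp_assoc]
      rw [this, TensorProduct.map_comp β (TensorProduct.map β β) _ _, LinearMap.comp_apply]
    have h13 : br1323 σ (br.compr₂ β) (β ∘ₗ α) r r
        = TensorProduct.map β (TensorProduct.map β β) (br1323 σ br α r r) := by
      unfold br1323
      rw [hlift, hmapαα, TensorProduct.map_comp (TensorProduct.map β β) β _ _,
        LinearMap.comp_apply, ← LinearMap.comp_apply (TensorProduct.assoc K L L L).toLinearMap,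
        hassocB, LinearMap.comp_apply]
    show chybeEl σ (br.compr₂ β) (β ∘ₗ α) r = 0
    unfold chybeEl
    rw [h12, h23, h13, ← map_add, ← map_add]
    show TensorProduct.map β (TensorProduct.map β β) (chybeEl σ br α r) = 0
    rw [hybe, map_zero]
end

section
/- Let (L, [·,·], Δ, r) be a coboundary Lie superbialgebra and let β : L → L be an even Lie superalgebra morphism such that β^{⊗2}(r) = r. Then L_β = (L, β∘[·,·], Δ∘β, β, r) is a multiplicative coboundary Hom-Lie superbialgebra. If moreover L is a quasi-triangular Lie superbialgebra, then L_β is a multiplicative quasi-triangular Hom-Lie superbialgebra. -/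
open TensorProduct

variable (K : Type*) [Field K] [CharZero K]

variable {K}

section YTAux

variable {K : Type*} [Field K] [CharZero K] {L : Type*} [AddCommGroup L] [Module K L]

lemma yt_homog_decomp (σ : L →ₗ[K] L) (hσσ : σ ∘ₗ σ = LinearMap.id) (x : L) :
    ∃ x0 x1, IsHomog σ 0 x0 ∧ IsHomog σ 1 x1 ∧ x = x0 + x1 := by
  have hσσ' : ∀ y, σ (σ y) = y := fun y => DFunLike.congr_fun hσσ y
  refine ⟨(2:K)⁻¹ • (x + σ x), (2:K)⁻¹ • (x - σ x), ?_, ?_, ?_⟩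
  · show σ _ = ((-1 : K) ^ (0 : ZMod 2).val) • _
    have h0 : ((0 : ZMod 2)).val = 0 := rfl
    rw [h0, pow_zero, one_smul, map_smul, map_add, hσσ', add_comm]
  · show σ _ = ((-1 : K) ^ (1 : ZMod 2).val) • _
    have h1 : ((1 : ZMod 2)).val = 1 := rfl
    rw [h1, pow_one, map_smul, map_sub, hσσ']
    module
  · rw [← smul_add]
    have h2 : (x + σ x) + (x - σ x) = (2:K) • x := by rw [two_smul]; abel
    rw [h2, smul_smul, inv_mul_cancel₀ (by norm_num : (2:K) ≠ 0), one_smul]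

lemma yt_isHomog_map (σ β : L →ₗ[K] L) (hβσ : ∀ x, σ (β x) = β (σ x)) {p : ZMod 2} {x : L}
    (hx : IsHomog σ p x) : IsHomog σ p (β x) := by
  unfold IsHomog at *
  rw [hβσ, hx, map_smul]

lemma yt_signPow_comm (σ β : L →ₗ[K] L) (hβσ : σ ∘ₗ β = β ∘ₗ σ) (p : ZMod 2) :
    signPow σ p ∘ₗ β = β ∘ₗ signPow σ p := by
  unfold signPow
  simp only [LinearMap.add_comp, LinearMap.comp_add, LinearMap.smul_comp, LinearMap.comp_smul,
    LinearMap.id_comp, LinearMap.comp_id, hβσ]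

lemma yt_adT_twist (σ β : L →ₗ[K] L) (br : L →ₗ[K] L →ₗ[K] L) (p : ZMod 2) (x : L) :
    adT σ (br.compr₂ β) β p x = TensorProduct.map β β ∘ₗ adT σ br LinearMap.id p x := by
  have hbx : (br.compr₂ β) x = β ∘ₗ br x := rfl
  unfold adT
  rw [LinearMap.comp_add, ← TensorProduct.map_comp, ← TensorProduct.map_comp, hbx,
    LinearMap.id_comp, LinearMap.comp_id]

lemma yt_adT_beta (σ β : L →ₗ[K] L) (br : L →ₗ[K] L →ₗ[K] L)
    (hβσ : σ ∘ₗ β = β ∘ₗ σ) (hβbr : ∀ x y, β (br x y) = br (β x) (β y)) (p : ZMod 2) (x : L) :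
    adT σ br LinearMap.id p (β x) ∘ₗ TensorProduct.map β β
      = TensorProduct.map β β ∘ₗ adT σ br LinearMap.id p x := by
  have hb : br (β x) ∘ₗ β = β ∘ₗ br x := LinearMap.ext fun y => (hβbr x y).symm
  unfold adT
  rw [LinearMap.add_comp, LinearMap.comp_add, ← TensorProduct.map_comp, ← TensorProduct.map_comp,
    ← TensorProduct.map_comp, ← TensorProduct.map_comp]
  simp only [LinearMap.id_comp, LinearMap.comp_id]
  rw [hb, yt_signPow_comm σ β hβσ p]

lemma yt_signOp_comm (σ f : L →ₗ[K] L) (F : L ⊗[K] L →ₗ[K] L ⊗[K] L)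
    (hf : σ ∘ₗ f = f ∘ₗ σ)
    (hF : TensorProduct.map σ σ ∘ₗ F = F ∘ₗ TensorProduct.map σ σ) :
    signOp σ (TensorProduct.map σ σ) ∘ₗ TensorProduct.map f F
      = TensorProduct.map f F ∘ₗ signOp σ (TensorProduct.map σ σ) := by
  unfold signOp
  simp only [LinearMap.smul_comp, LinearMap.comp_smul, LinearMap.add_comp, LinearMap.comp_add,
    LinearMap.sub_comp, LinearMap.comp_sub, LinearMap.id_comp, LinearMap.comp_id,
    ← TensorProduct.map_comp, hf, hF]

lemma yt_mapσσ_comm (σ β : L →ₗ[K] L) (hβσ : σ ∘ₗ β = β ∘ₗ σ) :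
    TensorProduct.map σ σ ∘ₗ TensorProduct.map β β
      = TensorProduct.map β β ∘ₗ TensorProduct.map σ σ := by
  rw [← TensorProduct.map_comp, ← TensorProduct.map_comp, hβσ]

lemma yt_cyclic_comm (σ β : L →ₗ[K] L) (hβσ : σ ∘ₗ β = β ∘ₗ σ) :
    superCyclic σ ∘ₗ TensorProduct.map β (TensorProduct.map β β)
      = TensorProduct.map β (TensorProduct.map β β) ∘ₗ superCyclic σ := by
  have hsign := yt_signOp_comm σ β (TensorProduct.map β β) hβσ (yt_mapσσ_comm σ β hβσ)
  apply LinearMap.ext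
  intro v
  simp only [superCyclic, LinearMap.comp_apply]
  rw [← LinearMap.comp_apply (signOp σ (TensorProduct.map σ σ)), hsign, LinearMap.comp_apply]
  rw [show (TensorProduct.comm K L (L ⊗[K] L)).toLinearMap
        (TensorProduct.map β (TensorProduct.map β β)
          (signOp σ (TensorProduct.map σ σ) v))
      = TensorProduct.map (TensorProduct.map β β) β
        ((TensorProduct.comm K L (L ⊗[K] L)).toLinearMap
          (signOp σ (TensorProduct.map σ σ) v))
    from (TensorProduct.map_comm (TensorProduct.map β β) β _).symm]
  exact (TensorProduct.map_map_assoc β β β _).symm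

end YTAux

/-- Twisting a coboundary (resp. quasi-triangular) Lie
superbialgebra by a Lie superalgebra endomorphism fixing `r` yields a
multiplicative coboundary (resp. quasi-triangular) Hom-Lie superbialgebra. -/
theorem coboundaryLieSuperbialgebra_yau_twist
    {K : Type*} [Field K] [CharZero K] {L : Type*} [AddCommGroup L] [Module K L]
    (σ : L →ₗ[K] L) (br : L →ₗ[K] L →ₗ[K] L) (Δ : L →ₗ[K] L ⊗[K] L) (r : L ⊗[K] L)
    (hc : IsCoboundary σ br (LinearMap.id : L →ₗ[K] L) Δ r)
    (β : L →ₗ[K] L)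
    (hβσ : ∀ x, σ (β x) = β (σ x))
    (hβbr : ∀ x y, β (br x y) = br (β x) (β y))
    (hβr : TensorProduct.map β β r = r) :
    (IsCoboundary σ (br.compr₂ β) β (Δ ∘ₗ β) r
      ∧ IsMultiplicative (br.compr₂ β) β ∧ IsComultiplicative β (Δ ∘ₗ β))
      ∧ (IsQuasiTriangular σ br (LinearMap.id : L →ₗ[K] L) Δ r →
          IsQuasiTriangular σ (br.compr₂ β) β (Δ ∘ₗ β) r) := by
  obtain ⟨⟨⟨hσσ, hσbr, -, hskew, hJac⟩, ⟨-, -, hσΔ, hcoskew, hcoJ⟩, hcompat⟩, -, hΔr⟩ := hc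
  have hσβ : σ ∘ₗ β = β ∘ₗ σ := LinearMap.ext hβσ
  -- pointwise Δ ∘ β on homogeneous elements
  have key : ∀ (p : ZMod 2) (y : L), IsHomog σ p y → Δ (β y) = TensorProduct.map β β (Δ y) := by
    intro p y hy
    rw [hΔr p (β y) (yt_isHomog_map σ β hβσ hy), hΔr p y hy]
    conv_lhs => rw [← hβr]
    rw [← LinearMap.comp_apply, yt_adT_beta σ β br hσβ hβbr p y, LinearMap.comp_apply]
  -- Δ ∘ β = (β ⊗ β) ∘ Δ as linear maps
  have hΔβ : Δ ∘ₗ β = TensorProduct.map β β ∘ₗ Δ := by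
    apply LinearMap.ext
    intro x
    obtain ⟨x0, x1, h0, h1, hx⟩ := yt_homog_decomp σ hσσ x
    simp only [LinearMap.comp_apply, hx, map_add, key 0 x0 h0, key 1 x1 h1]
  have hΔβ' : ∀ z, Δ (β z) = TensorProduct.map β β (Δ z) := fun z => DFunLike.congr_fun hΔβ z
  -- the twisted Hom-Lie superalgebra
  have halg : IsHomLieSuperalgebra σ (br.compr₂ β) β := by
    refine ⟨hσσ, ?_, hβσ, ?_, ?_⟩
    · intro x y
      simp only [LinearMap.compr₂_apply]
      rw [hβσ, hσbr]
    · intro p q x y hx hy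
      simp only [LinearMap.compr₂_apply]
      rw [hskew p q x y hx hy, map_smul]
    · intro p q r0 x y z hx hy hz
      have hx2 := yt_isHomog_map σ β hβσ (yt_isHomog_map σ β hβσ hx)
      have hy2 := yt_isHomog_map σ β hβσ (yt_isHomog_map σ β hβσ hy)
      have hz2 := yt_isHomog_map σ β hβσ (yt_isHomog_map σ β hβσ hz)
      have hJ := hJac p q r0 (β (β x)) (β (β y)) (β (β z)) hx2 hy2 hz2
      simp only [LinearMap.id_apply] at hJ
      simp only [LinearMap.compr₂_apply, hβbr]
      exact hJ
  -- the twisted Hom-Lie supercoalgebra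
  have hξβ := yt_cyclic_comm σ β hσβ
  have hξβ' : ∀ v, superCyclic σ (TensorProduct.map β (TensorProduct.map β β) v)
      = TensorProduct.map β (TensorProduct.map β β) (superCyclic σ v) :=
    fun v => DFunLike.congr_fun hξβ v
  have hcoalg : IsHomLieSupercoalgebra σ β (Δ ∘ₗ β) := by
    refine ⟨hσσ, fun x => (hβσ x).symm ▸ rfl, ?_, ?_, ?_⟩
    · rw [← LinearMap.comp_assoc, hσΔ, LinearMap.comp_assoc, hσβ, ← LinearMap.comp_assoc]
    · intro x
      exact hcoskew (β x)
    · have hmap : TensorProduct.map β (Δ ∘ₗ β)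
          = TensorProduct.map β (TensorProduct.map β β) ∘ₗ TensorProduct.map LinearMap.id Δ := by
        rw [hΔβ, ← TensorProduct.map_comp, LinearMap.comp_id]
      apply LinearMap.ext
      intro x
      have h0 := DFunLike.congr_fun hcoJ (β x)
      simp only [LinearMap.comp_apply, LinearMap.zero_apply, LinearMap.add_apply,
        LinearMap.id_apply] at h0 ⊢
      rw [hmap]
      simp only [LinearMap.comp_apply]
      set w := TensorProduct.map LinearMap.id Δ (Δ (β x)) with hw
      rw [hξβ' w, hξβ' (superCyclic σ w)]
      rw [← map_add, ← map_add, h0, map_zero]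
  -- compatibility
  have hcb : IsCoboundary σ (br.compr₂ β) β (Δ ∘ₗ β) r := by
    refine ⟨⟨halg, hcoalg, ?_⟩, hβr, ?_⟩
    · intro p q x y hx hy
      have hx' := yt_isHomog_map σ β hβσ hx
      have hy' := yt_isHomog_map σ β hβσ hy
      have hcp := hcompat p q (β x) (β y) hx' hy'
      simp only [LinearMap.id_apply] at hcp
      simp only [LinearMap.comp_apply, LinearMap.compr₂_apply]
      rw [yt_adT_twist σ β br p (β x), yt_adT_twist σ β br q (β y)]
      simp only [LinearMap.comp_apply]
      rw [hβbr x y, hΔβ' (br (β x) (β y)), hcp, map_sub, map_smul]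
    · intro p x hx
      rw [LinearMap.comp_apply, key p x hx, yt_adT_twist σ β br p x, LinearMap.comp_apply,
        hΔr p x hx]
  have hmult : IsMultiplicative (br.compr₂ β) β := by
    intro x y
    simp only [LinearMap.compr₂_apply, hβbr]
  have hcomult : IsComultiplicative β (Δ ∘ₗ β) := by
    unfold IsComultiplicative
    rw [← LinearMap.comp_assoc, hΔβ, LinearMap.comp_assoc]
  refine ⟨⟨hcb, hmult, hcomult⟩, ?_⟩
  rintro ⟨-, hchybe⟩
  refine ⟨hcb, ?_⟩
  -- CHYBE for the twisted structure
  have hlift : TensorProduct.lift (br.compr₂ β) = β ∘ₗ TensorProduct.lift br :=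
    TensorProduct.lift_compr₂ β
  have h1213 : br1213 σ (br.compr₂ β) β r r
      = TensorProduct.map β (TensorProduct.map β β) (br1213 σ br LinearMap.id r r) := by
    unfold br1213
    have e : TensorProduct.map β (TensorProduct.map β β)
        ∘ₗ TensorProduct.map (TensorProduct.lift br) (TensorProduct.map LinearMap.id LinearMap.id)
        = TensorProduct.map (TensorProduct.lift (br.compr₂ β)) (TensorProduct.map β β) := by
      rw [← TensorProduct.map_comp, hlift, TensorProduct.map_id, LinearMap.comp_id]
    conv_rhs => rw [← LinearMap.comp_apply, e]
  have h1223 : br1223 (br.compr₂ β) β r r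
      = TensorProduct.map β (TensorProduct.map β β) (br1223 br LinearMap.id r r) := by
    unfold br1223
    have e : TensorProduct.map β (TensorProduct.map β β)
        ∘ₗ TensorProduct.map LinearMap.id
            (TensorProduct.map (TensorProduct.lift br) LinearMap.id
              ∘ₗ (TensorProduct.assoc K L L L).symm.toLinearMap)
        = TensorProduct.map β
            (TensorProduct.map (TensorProduct.lift (br.compr₂ β)) β
              ∘ₗ (TensorProduct.assoc K L L L).symm.toLinearMap) := by
      rw [← TensorProduct.map_comp, LinearMap.comp_id]
      congr 1
      rw [← LinearMap.comp_assoc, ← TensorProduct.map_comp, hlift, LinearMap.comp_id]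
    conv_rhs => rw [← LinearMap.comp_apply, e]
  have h1323 : br1323 σ (br.compr₂ β) β r r
      = TensorProduct.map β (TensorProduct.map β β) (br1323 σ br LinearMap.id r r) := by
    unfold br1323
    have easc : ∀ u : (L ⊗[K] L) ⊗[K] L,
        TensorProduct.map β (TensorProduct.map β β)
            ((TensorProduct.assoc K L L L).toLinearMap u)
          = (TensorProduct.assoc K L L L).toLinearMap
              (TensorProduct.map (TensorProduct.map β β) β u) :=
      fun u => TensorProduct.map_map_assoc β β β u
    rw [easc]
    congr 1
    have e : TensorProduct.map (TensorProduct.map β β) β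
        ∘ₗ TensorProduct.map (TensorProduct.map LinearMap.id LinearMap.id)
            (TensorProduct.lift br)
        = TensorProduct.map (TensorProduct.map β β) (TensorProduct.lift (br.compr₂ β)) := by
      rw [← TensorProduct.map_comp, hlift, TensorProduct.map_id, LinearMap.comp_id]
    conv_rhs => rw [← LinearMap.comp_apply, e]
  unfold chybeEl at hchybe ⊢
  rw [h1213, h1223, h1323, ← map_add, ← map_add, hchybe, map_zero]
end

section
/- Let (L, [·,·], Δ, α, r) be a multiplicative coboundary (resp. quasi-triangular) Hom-Lie superbialgebra. Then for every integer n ≥ 0, L_{αⁿ} = (L, αⁿ∘[·,·], Δ∘αⁿ, α^{n+1}, r) is also a multiplicative coboundary (resp. quasi-triangular) Hom-Lie superbialgebra. -/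
open TensorProduct

variable (K : Type*) [Field K] [CharZero K]

variable {K}

section Aux

variable {K : Type*} [Field K] [CharZero K] {L : Type*} [AddCommGroup L] [Module K L]

lemma aux_comm_nat {M N : Type*} [AddCommGroup M] [Module K M] [AddCommGroup N] [Module K N]
    (f : M →ₗ[K] M) (g : N →ₗ[K] N) :
    (TensorProduct.comm K M N).toLinearMap ∘ₗ TensorProduct.map f g
      = TensorProduct.map g f ∘ₗ (TensorProduct.comm K M N).toLinearMap := by
  ext x y; simp

lemma aux_assoc_nat (f g h : L →ₗ[K] L) :
    (TensorProduct.assoc K L L L).toLinearMap ∘ₗ TensorProduct.map (TensorProduct.map f g) h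
      = TensorProduct.map f (TensorProduct.map g h) ∘ₗ (TensorProduct.assoc K L L L).toLinearMap := by
  ext x y z; simp

lemma aux_superCyclic_nat (σ β : L →ₗ[K] L) (h : ∀ x, σ (β x) = β (σ x)) :
    superCyclic σ ∘ₗ TensorProduct.map β (TensorProduct.map β β)
      = TensorProduct.map β (TensorProduct.map β β) ∘ₗ superCyclic σ := by
  ext x y z
  simp [superCyclic, signOp, h, TensorProduct.smul_tmul', TensorProduct.tmul_smul,
    TensorProduct.tmul_add, TensorProduct.add_tmul, TensorProduct.tmul_sub,
    TensorProduct.sub_tmul]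

end Aux

/-- A multiplicative coboundary (resp. quasi-triangular)
Hom-Lie superbialgebra yields an infinite sequence `L_{αⁿ}` of such. -/
theorem coboundaryHomLieSuperbialgebra_pow_twist
    {K : Type*} [Field K] [CharZero K] {L : Type*} [AddCommGroup L] [Module K L]
    (σ : L →ₗ[K] L) (br : L →ₗ[K] L →ₗ[K] L) (α : L →ₗ[K] L) (Δ : L →ₗ[K] L ⊗[K] L)
    (r : L ⊗[K] L)
    (hc : IsCoboundary σ br α Δ r)
    (hm : IsMultiplicative br α) (hcm : IsComultiplicative α Δ) (n : ℕ) :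
    (IsCoboundary σ (br.compr₂ (α ^ n)) (α ^ (n + 1)) (Δ ∘ₗ (α ^ n)) r
      ∧ IsMultiplicative (br.compr₂ (α ^ n)) (α ^ (n + 1))
      ∧ IsComultiplicative (α ^ (n + 1)) (Δ ∘ₗ (α ^ n)))
      ∧ (IsQuasiTriangular σ br α Δ r →
          IsQuasiTriangular σ (br.compr₂ (α ^ n)) (α ^ (n + 1)) (Δ ∘ₗ (α ^ n)) r) := by
  obtain ⟨⟨halg, hcoalg, hcompat⟩, hrfix, hΔr⟩ := hc
  obtain ⟨hσσ, hσbr, hσα, hskew, hjac⟩ := halg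
  obtain ⟨-, -, hΔσ, hcoskew, hcojac⟩ := hcoalg
  have hpow_comp : ∀ m : ℕ, (α ^ (m + 1) : L →ₗ[K] L) = (α ^ m : L →ₗ[K] L) ∘ₗ α :=
    fun m => by rw [pow_succ]; rfl
  have hpow_comp' : ∀ m : ℕ, (α ^ (m + 1) : L →ₗ[K] L) = α ∘ₗ (α ^ m : L →ₗ[K] L) :=
    fun m => by rw [pow_succ']; rfl
  have hn1 : ∀ z, (α ^ (n + 1)) z = (α ^ n) (α z) := fun z => by rw [hpow_comp]; rfl
  have hn1' : ∀ z, (α ^ (n + 1)) z = α ((α ^ n) z) := fun z => by rw [hpow_comp']; rfl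
  have hmP : ∀ (m : ℕ) (x y : L), (α ^ m) (br x y) = br ((α ^ m) x) ((α ^ m) y) := by
    intro m
    induction m with
    | zero => intro x y; simp
    | succ m ih => intro x y; rw [hpow_comp]; simp only [LinearMap.comp_apply]; rw [hm x y, ih]
  have hσP : ∀ (m : ℕ) (x : L), σ ((α ^ m) x) = (α ^ m) (σ x) := by
    intro m
    induction m with
    | zero => intro x; simp
    | succ m ih => intro x; rw [hpow_comp]; simp only [LinearMap.comp_apply, ih, hσα]
  have hAα : ∀ x, (α ^ n) (α x) = α ((α ^ n) x) := fun x => by rw [← hn1 x, hn1' x]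
  have hcommpow : ∀ t, (α ^ (n + 1)) ((α ^ n) t) = (α ^ n) ((α ^ (n + 1)) t) := fun t => by
    rw [← Module.End.mul_apply, ← Module.End.mul_apply, pow_mul_comm]
  have hcmP : ∀ (m : ℕ) (x : L), Δ ((α ^ m) x) = TensorProduct.map (α ^ m) (α ^ m) (Δ x) := by
    intro m
    induction m with
    | zero => intro x; simp [TensorProduct.map_one]
    | succ m ih =>
      intro x
      have h1 := LinearMap.congr_fun hcm ((α ^ m) x)
      simp only [LinearMap.comp_apply] at h1
      rw [hpow_comp' m]
      calc Δ ((α ∘ₗ α ^ m) x) = TensorProduct.map α α (Δ ((α ^ m) x)) := h1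
        _ = TensorProduct.map α α (TensorProduct.map (α ^ m) (α ^ m) (Δ x)) := by rw [ih]
        _ = TensorProduct.map (α ∘ₗ α ^ m) (α ∘ₗ α ^ m) (Δ x) := by
            rw [← LinearMap.comp_apply, ← TensorProduct.map_comp]
  have hrP : ∀ m : ℕ, TensorProduct.map (α ^ m) (α ^ m) r = r := by
    intro m
    induction m with
    | zero => simp [TensorProduct.map_one]
    | succ m ih =>
      rw [hpow_comp, TensorProduct.map_comp, LinearMap.comp_apply, hrfix, ih]
  have hhomP : ∀ (p : ZMod 2) x, IsHomog σ p x → IsHomog σ p ((α ^ n) x) := by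
    intro p x hx
    unfold IsHomog at hx ⊢
    rw [hσP, hx, map_smul]
  have hsP : ∀ (p : ZMod 2) x, (α ^ n) (signPow σ p x) = signPow σ p ((α ^ n) x) := by
    intro p x
    simp [signPow, hσP]
  have hadT1 : ∀ (p : ZMod 2) (x : L),
      TensorProduct.map (α ^ n) (α ^ n) ∘ₗ adT σ br α p x
        = adT σ br α p ((α ^ n) x) ∘ₗ TensorProduct.map (α ^ n) (α ^ n) := by
    intro p x
    apply TensorProduct.ext'
    intro y z
    simp only [LinearMap.comp_apply, adT, LinearMap.add_apply, TensorProduct.map_tmul,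
      map_add, hmP, hAα, hsP]
  have hadT2 : ∀ (p : ZMod 2) (x : L),
      adT σ (br.compr₂ (α ^ n)) (α ^ (n + 1)) p x
        = TensorProduct.map (α ^ n) (α ^ n) ∘ₗ adT σ br α p x := by
    intro p x
    apply TensorProduct.ext'
    intro y z
    simp only [adT, LinearMap.comp_apply, LinearMap.add_apply, TensorProduct.map_tmul,
      map_add, LinearMap.compr₂_apply, hn1, hAα, hsP]
  -- twisted algebra
  have halg' : IsHomLieSuperalgebra σ (br.compr₂ (α ^ n)) (α ^ (n + 1)) := by
    refine ⟨hσσ, ?_, fun x => hσP (n + 1) x, ?_, ?_⟩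
    · intro x y
      simp only [LinearMap.compr₂_apply, hσP, hσbr]
    · intro p q x y hx hy
      simp only [LinearMap.compr₂_apply]
      rw [hskew p q x y hx hy]
      simp
    · intro p q r' x y z hx hy hz
      have key : ∀ a b c : L,
          (br.compr₂ (α ^ n)) ((α ^ (n + 1)) a) ((br.compr₂ (α ^ n)) b c)
            = (α ^ n) ((α ^ n) (br (α a) (br b c))) := by
        intro a b c
        simp only [LinearMap.compr₂_apply]
        congr 1
        rw [hmP n (α a) (br b c), hn1 a]
      simp only [key]
      have h0 := hjac p q r' x y z hx hy hz
      calc eps K p r' • (α ^ n) ((α ^ n) (br (α x) (br y z)))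
            + eps K r' q • (α ^ n) ((α ^ n) (br (α z) (br x y)))
            + eps K q p • (α ^ n) ((α ^ n) (br (α y) (br z x)))
          = (α ^ n) ((α ^ n) (eps K p r' • br (α x) (br y z)
              + eps K r' q • br (α z) (br x y) + eps K q p • br (α y) (br z x))) := by
            simp [map_add, map_smul]
        _ = 0 := by rw [h0]; simp
  -- twisted multiplicativity
  have hm' : IsMultiplicative (br.compr₂ (α ^ n)) (α ^ (n + 1)) := by
    intro x y
    simp only [LinearMap.compr₂_apply]
    rw [hcommpow (br x y)]
    exact congrArg _ (hmP (n + 1) x y)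
  -- twisted comultiplicativity
  have hcm' : IsComultiplicative (α ^ (n + 1)) (Δ ∘ₗ (α ^ n)) := by
    apply LinearMap.ext
    intro x
    simp only [LinearMap.comp_apply]
    rw [← hcmP (n + 1) ((α ^ n) x), ← hcommpow x]
  -- twisted cobracket axioms
  have hΔσ' : TensorProduct.map σ σ ∘ₗ (Δ ∘ₗ (α ^ n)) = (Δ ∘ₗ (α ^ n)) ∘ₗ σ := by
    apply LinearMap.ext
    intro x
    simp only [LinearMap.comp_apply]
    have h1 := LinearMap.congr_fun hΔσ ((α ^ n) x)
    simp only [LinearMap.comp_apply] at h1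
    rw [h1, hσP]
  have hcoskew' : ∀ x, ∃ u, (Δ ∘ₗ (α ^ n)) x = u - superTwist σ u := by
    intro x
    simpa using hcoskew ((α ^ n) x)
  have hcojac' : (LinearMap.id + superCyclic σ + superCyclic σ ∘ₗ superCyclic σ)
      ∘ₗ TensorProduct.map (α ^ (n + 1)) (Δ ∘ₗ (α ^ n)) ∘ₗ (Δ ∘ₗ (α ^ n)) = 0 := by
    set M := TensorProduct.map (α ^ n) (TensorProduct.map (α ^ n) (α ^ n)) with hM
    have e2 : (Δ ∘ₗ (α ^ n) : L →ₗ[K] L ⊗[K] L)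
        = TensorProduct.map (α ^ n) (α ^ n) ∘ₗ Δ := LinearMap.ext (hcmP n)
    have hcompcomp : (α ^ (n + 1) : L →ₗ[K] L) ∘ₗ (α ^ n)
        = (α ^ n) ∘ₗ ((α ^ n) ∘ₗ α) := by
      have h1 : ((α ^ (n + 1)) * (α ^ n) : L →ₗ[K] L) = (α ^ n) * ((α ^ n) * α) := by
        rw [← pow_succ, ← pow_add, ← pow_add]
        ring_nf
      exact h1
    have hstep : TensorProduct.map (α ^ (n + 1)) (Δ ∘ₗ (α ^ n)) ∘ₗ (Δ ∘ₗ (α ^ n))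
        = (M ∘ₗ M) ∘ₗ (TensorProduct.map α Δ ∘ₗ Δ) := by
      rw [e2]
      calc TensorProduct.map (α ^ (n + 1)) (TensorProduct.map (α ^ n) (α ^ n) ∘ₗ Δ)
              ∘ₗ (TensorProduct.map (α ^ n) (α ^ n) ∘ₗ Δ)
          = (TensorProduct.map (α ^ (n + 1)) (TensorProduct.map (α ^ n) (α ^ n) ∘ₗ Δ)
              ∘ₗ TensorProduct.map (α ^ n) (α ^ n)) ∘ₗ Δ := by
            rw [LinearMap.comp_assoc]
        _ = TensorProduct.map ((α ^ (n + 1)) ∘ₗ (α ^ n))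
              ((TensorProduct.map (α ^ n) (α ^ n) ∘ₗ Δ) ∘ₗ (α ^ n)) ∘ₗ Δ := by
            rw [← TensorProduct.map_comp]
        _ = TensorProduct.map ((α ^ n) ∘ₗ ((α ^ n) ∘ₗ α))
              (TensorProduct.map (α ^ n) (α ^ n)
                ∘ₗ (TensorProduct.map (α ^ n) (α ^ n) ∘ₗ Δ)) ∘ₗ Δ := by
            rw [hcompcomp, LinearMap.comp_assoc, e2]
        _ = (M ∘ₗ (M ∘ₗ TensorProduct.map α Δ)) ∘ₗ Δ := by
            rw [TensorProduct.map_comp, TensorProduct.map_comp]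
        _ = (M ∘ₗ M) ∘ₗ (TensorProduct.map α Δ ∘ₗ Δ) := by
            simp only [LinearMap.comp_assoc]
    have hξM := aux_superCyclic_nat σ (α ^ n) (fun x => hσP n x)
    have hξMM : superCyclic σ ∘ₗ (M ∘ₗ M) = (M ∘ₗ M) ∘ₗ superCyclic σ := by
      rw [← LinearMap.comp_assoc, hξM, LinearMap.comp_assoc, hξM, ← LinearMap.comp_assoc]
    have hξξMM : (superCyclic σ ∘ₗ superCyclic σ) ∘ₗ (M ∘ₗ M)
        = (M ∘ₗ M) ∘ₗ (superCyclic σ ∘ₗ superCyclic σ) := by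
      rw [LinearMap.comp_assoc, hξMM, ← LinearMap.comp_assoc, hξMM, LinearMap.comp_assoc]
    rw [hstep, ← LinearMap.comp_assoc]
    have hswap : (LinearMap.id + superCyclic σ + superCyclic σ ∘ₗ superCyclic σ) ∘ₗ (M ∘ₗ M)
        = (M ∘ₗ M) ∘ₗ (LinearMap.id + superCyclic σ + superCyclic σ ∘ₗ superCyclic σ) := by
      simp only [LinearMap.add_comp, LinearMap.comp_add, LinearMap.id_comp,
        LinearMap.comp_id, hξMM, hξξMM]
    rw [hswap, LinearMap.comp_assoc, hcojac, LinearMap.comp_zero]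
  have hcoalg' : IsHomLieSupercoalgebra σ (α ^ (n + 1)) (Δ ∘ₗ (α ^ n)) :=
    ⟨hσσ, fun x => hσP (n + 1) x, hΔσ', hcoskew', hcojac'⟩
  -- twisted compatibility
  have hcompat' : ∀ (p q : ZMod 2) (x y : L), IsHomog σ p x → IsHomog σ q y →
      (Δ ∘ₗ (α ^ n)) ((br.compr₂ (α ^ n)) x y)
        = adT σ (br.compr₂ (α ^ n)) (α ^ (n + 1)) p ((α ^ (n + 1)) x) ((Δ ∘ₗ (α ^ n)) y)
          - eps K p q • adT σ (br.compr₂ (α ^ n)) (α ^ (n + 1)) q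
              ((α ^ (n + 1)) y) ((Δ ∘ₗ (α ^ n)) x) := by
    intro p q x y hx hy
    have h0 := hcompat p q ((α ^ n) x) ((α ^ n) y) (hhomP p x hx) (hhomP q y hy)
    simp only [LinearMap.comp_apply, LinearMap.compr₂_apply]
    rw [hadT2, hadT2]
    simp only [LinearMap.comp_apply]
    rw [← LinearMap.map_smul, ← map_sub]
    rw [show (α ^ n) ((α ^ n) (br x y)) = (α ^ n) (br ((α ^ n) x) ((α ^ n) y)) from
      congrArg _ (hmP n x y), hcmP n, h0, hn1' x, hn1' y]
  have hcob' : IsCoboundary σ (br.compr₂ (α ^ n)) (α ^ (n + 1)) (Δ ∘ₗ (α ^ n)) r := by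
    refine ⟨⟨halg', hcoalg', hcompat'⟩, hrP (n + 1), ?_⟩
    intro p x hx
    have h1 := LinearMap.congr_fun (hadT1 p x) r
    simp only [LinearMap.comp_apply, hrP n] at h1
    rw [LinearMap.comp_apply, hΔr p ((α ^ n) x) (hhomP p x hx), ← h1, hadT2,
      LinearMap.comp_apply]
  refine ⟨⟨hcob', hm', hcm'⟩, ?_⟩
  rintro ⟨-, hchybe⟩
  refine ⟨hcob', ?_⟩
  have hlift : TensorProduct.lift (br.compr₂ (α ^ n)) = (α ^ n) ∘ₗ TensorProduct.lift br :=
    TensorProduct.lift_compr₂ _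
  have h1213 : br1213 σ (br.compr₂ (α ^ n)) (α ^ (n + 1)) r r
      = TensorProduct.map (α ^ n) (TensorProduct.map (α ^ n) (α ^ n))
          (br1213 σ br α r r) := by
    unfold br1213
    rw [hlift, hpow_comp n, TensorProduct.map_comp, TensorProduct.map_comp,
      LinearMap.comp_apply]
  have h1223 : br1223 (br.compr₂ (α ^ n)) (α ^ (n + 1)) r r
      = TensorProduct.map (α ^ n) (TensorProduct.map (α ^ n) (α ^ n))
          (br1223 br α r r) := by
    unfold br1223
    rw [hlift, hpow_comp n,
      TensorProduct.map_comp (α ^ n) (α ^ n) (TensorProduct.lift br) α,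
      LinearMap.comp_assoc,
      TensorProduct.map_comp (α ^ n)
        (TensorProduct.map (α ^ n) (α ^ n)) α
        (TensorProduct.map (TensorProduct.lift br) α
          ∘ₗ (TensorProduct.assoc K L L L).symm.toLinearMap),
      LinearMap.comp_apply]
  have h1323 : br1323 σ (br.compr₂ (α ^ n)) (α ^ (n + 1)) r r
      = TensorProduct.map (α ^ n) (TensorProduct.map (α ^ n) (α ^ n))
          (br1323 σ br α r r) := by
    unfold br1323
    rw [hlift, hpow_comp n, TensorProduct.map_comp, TensorProduct.map_comp,
      LinearMap.comp_apply]
    have h2 := LinearMap.congr_fun (aux_assoc_nat (α ^ n) (α ^ n) (α ^ n))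
      (TensorProduct.map (TensorProduct.map α α) (TensorProduct.lift br)
        (signedMidSwap σ (r ⊗ₜ[K] r)))
    simp only [LinearMap.comp_apply] at h2
    exact h2
  unfold chybeEl at hchybe ⊢
  rw [h1213, h1223, h1323, ← map_add, ← map_add, hchybe, map_zero]
end
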